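/- arXiv:2008.03386 — 5 statements merged into one kernel-verified Lean document; each statement's English description precedes it below -/
import Mathlib

section
/- (Goblot) If ε is an ordinal whose cofinality equals ℵ_k for some natural number k, then the cohomological dimension of ε is at most k+1: for every inverse system X of abelian groups over ε and every integer n > k+1, lim^n X = 0. -/
noncomputable section

/-- An inverse system of abelian groups over the ordinal `ε`: abelian groups `G α`
for `α < ε` together with bonding homomorphisms `G β →+ G α` for `α ≤ β < ε`,
with the identity and composition laws. -/
structure InvSys (ε : Ordinal) where
  G : Set.Iio ε → Type 1
  [grp : ∀ α, AddCommGroup (G α)]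
  map : ∀ {α β : Set.Iio ε}, α ≤ β → G β →+ G α
  map_id : ∀ α : Set.Iio ε, map (le_refl α) = AddMonoidHom.id (G α)
  map_comp : ∀ {α β γ : Set.Iio ε} (h₁ : α ≤ β) (h₂ : β ≤ γ) (x : G γ),
    map h₁ (map h₂ x) = map (h₁.trans h₂) x

attribute [instance] InvSys.grp

/-- The strictly increasing `m`-tuples of ordinals below `ε`. -/
def Tup (ε : Ordinal) (m : ℕ) : Type 1 :=
  {t : Fin m → ↥(Set.Iio ε) // StrictMono t}

/-- The tuple obtained by removing the `i`-th entry. -/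
def faceT {ε : Ordinal} {m : ℕ} (t : Tup ε (m + 1)) (i : Fin (m + 1)) : Tup ε m :=
  ⟨t.1 ∘ i.succAbove, t.2.comp (Fin.strictMono_succAbove i)⟩

/-- The cochain group `K^j(X) = Π_{α⃗ ∈ [ε]^{j+1}} X_{α₀}`. -/
def K {ε : Ordinal} (X : InvSys ε) (j : ℕ) : Type 1 :=
  ∀ t : Tup ε (j + 1), X.G (t.1 0)

instance {ε : Ordinal} (X : InvSys ε) (j : ℕ) : AddCommGroup (K X j) :=
  Pi.addCommGroup

/-- The coboundary map `d^j : K^j(X) → K^{j+1}(X)`,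
`d^j(c)(α⃗) = x_{α₀α₁}(c(α⃗^0)) + Σ_{i=1}^{j+1} (−1)^i c(α⃗^i)` (the bonding map applied
to each face term transports it into the group indexed by the least entry `α₀`;
for `i ≥ 1` this bonding map is the identity since `α⃗^i` has least entry `α₀`). -/
def dK {ε : Ordinal} (X : InvSys ε) (j : ℕ) (c : K X j) : K X (j + 1) :=
  fun t => ∑ i : Fin (j + 2),
    (-1 : ℤ) ^ (i : ℕ) •
      X.map (t.2.monotone (Fin.zero_le (i.succAbove 0))) (c (faceT t i))

/-- `limVanishes X n` says that the `n`-th derived limit of `X` vanishes: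
`lim^n X = ker d^n / im d^{n−1} = 0` (with `lim^0 X = ker d^0`). -/
def limVanishes {ε : Ordinal} (X : InvSys ε) : ℕ → Prop
  | 0 => ∀ c : K X 0, dK X 0 c = 0 → c = 0
  | n + 1 => ∀ c : K X (n + 1), dK X (n + 1) c = 0 → ∃ b : K X n, dK X n b = c

lemma succAbove_val {n : ℕ} (p : Fin (n+1)) (x : Fin n) :
    (p.succAbove x : ℕ) = if (x:ℕ) < (p:ℕ) then (x:ℕ) else (x:ℕ)+1 := by
  rw [Fin.succAbove]
  split_ifs with h1 h2 <;> simp_all [Fin.lt_def, Fin.castSucc, Fin.succ]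

lemma succAbove_val_or {n : ℕ} (p : Fin (n+1)) (x : Fin n) :
    ((x:ℕ) < (p:ℕ) ∧ (p.succAbove x : ℕ) = (x:ℕ)) ∨
      ((p:ℕ) ≤ (x:ℕ) ∧ (p.succAbove x : ℕ) = (x:ℕ)+1) := by
  rw [succAbove_val]
  by_cases h : (x:ℕ) < (p:ℕ)
  · left; exact ⟨h, if_pos h⟩
  · right; exact ⟨by omega, if_neg h⟩

lemma double_face_swap {ε : Ordinal} {n : ℕ} (t : Tup ε (n+2))
    (a₁ : Fin (n+2)) (b₁ : Fin (n+1)) (a₂ : Fin (n+2)) (b₂ : Fin (n+1))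
    (hpq : (a₁:ℕ) ≤ (b₁:ℕ)) (hp' : (a₂:ℕ) = (b₁:ℕ)+1) (hq' : (b₂:ℕ) = (a₁:ℕ)) :
    faceT (faceT t a₁) b₁ = faceT (faceT t a₂) b₂ := by
  apply Subtype.ext
  funext x
  show t.1 _ = t.1 _
  apply congrArg
  apply Fin.ext
  simp only [succAbove_val]
  split_ifs <;> omega

lemma map_congr_tup {ε : Ordinal} {X : InvSys ε} {j : ℕ} (a : K X j) {α : Set.Iio ε}
    {u v : Tup ε (j+1)} (huv : u = v) (h : α ≤ u.1 0) (h' : α ≤ v.1 0) :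
    X.map h (a u) = X.map h' (a v) := by subst huv; rfl

lemma smul_map_cancel {ε : Ordinal} {X : InvSys ε} {j : ℕ} (a : K X j) {α : Set.Iio ε}
    {u v : Tup ε (j+1)} (huv : u = v) {s s' : ℤ} (hs : s + s' = 0)
    (h : α ≤ u.1 0) (h' : α ≤ v.1 0) :
    s • X.map h (a u) + s' • X.map h' (a v) = 0 := by
  subst huv
  have hh : X.map h' (a u) = X.map h (a u) := rfl
  rw [hh, ← add_smul, hs, zero_smul]

lemma dK_dK {ε : Ordinal} (X : InvSys ε) (j : ℕ) (a : K X j) (t : Tup ε (j+3)) :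
    dK X (j+1) (dK X j a) t = 0 := by
  have expand : dK X (j+1) (dK X j a) t
      = ∑ p : Fin (j+3) × Fin (j+2), ((-1:ℤ)^((p.1:ℕ)+(p.2:ℕ)) •
          X.map (t.2.monotone (Fin.zero_le (p.1.succAbove (p.2.succAbove 0))))
            (a (faceT (faceT t p.1) p.2))) := by
    rw [Fintype.sum_prod_type]
    refine Finset.sum_congr rfl fun i _ => ?_
    show (-1:ℤ)^(i:ℕ) • X.map _ (dK X j a (faceT t i)) = _
    rw [show dK X j a (faceT t i) = ∑ i' : Fin (j+2), (-1:ℤ)^(i':ℕ) •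
      X.map ((faceT t i).2.monotone (Fin.zero_le (i'.succAbove 0))) (a (faceT (faceT t i) i'))
      from rfl]
    rw [map_sum, Finset.smul_sum]
    refine Finset.sum_congr rfl fun i' _ => ?_
    rw [map_zsmul, smul_smul, ← pow_add]; erw [X.map_comp]
    rfl
  rw [expand]
  apply Finset.sum_ninvolution
    (g := fun p : Fin (j+3) × Fin (j+2) =>
      if h : (p.2:ℕ) < (p.1:ℕ) then
        (⟨(p.2:ℕ), by have := p.2.isLt; omega⟩, ⟨(p.1:ℕ)-1, by have := p.1.isLt; omega⟩)
      else
        (⟨(p.2:ℕ)+1, by have := p.2.isLt; omega⟩,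
         ⟨(p.1:ℕ), by have := p.2.isLt; have := p.1.isLt; omega⟩))
  · rintro ⟨i, i'⟩
    by_cases h : (i':ℕ) < (i:ℕ)
    · rw [dif_pos h]
      dsimp only
      have e : faceT (faceT t (⟨(i':ℕ), by have := i'.isLt; omega⟩ : Fin (j+3)))
            (⟨(i:ℕ)-1, by have := i.isLt; omega⟩ : Fin (j+2)) = faceT (faceT t i) i' :=
        double_face_swap t _ _ _ _ (by dsimp; omega) (by dsimp; omega) (by dsimp)
      refine smul_map_cancel a e.symm ?_ _ _
      have hodd : ((i:ℕ) + (i':ℕ)) = ((i':ℕ) + ((i:ℕ)-1)) + 1 := by omega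
      rw [hodd, pow_succ]
      ring
    · rw [dif_neg h]
      dsimp only
      have e : faceT (faceT t (⟨(i':ℕ)+1, by have := i'.isLt; omega⟩ : Fin (j+3)))
            (⟨(i:ℕ), by have := i'.isLt; have := i.isLt; omega⟩ : Fin (j+2))
            = faceT (faceT t i) i' :=
        (double_face_swap t i i' _ _ (by omega) (by dsimp) (by dsimp)).symm
      refine smul_map_cancel a e.symm ?_ _ _
      have hodd : (((i':ℕ)+1) + (i:ℕ)) = ((i:ℕ) + (i':ℕ)) + 1 := by omega
      rw [hodd, pow_succ]
      ring
  · rintro ⟨i, i'⟩ _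
    by_cases h : (i':ℕ) < (i:ℕ) <;> simp [h, Prod.ext_iff, Fin.ext_iff] <;> omega
  · intro p; exact Finset.mem_univ _
  · rintro ⟨i, i'⟩
    by_cases h : (i':ℕ) < (i:ℕ)
    · rw [dif_pos h]
      rw [dif_neg (by dsimp; omega)]
      simp [Prod.ext_iff, Fin.ext_iff]; omega
    · rw [dif_neg h]
      rw [dif_pos (by dsimp; omega)]
      simp [Prod.ext_iff, Fin.ext_iff]

lemma map_id_apply {ε : Ordinal} (X : InvSys ε) {α : Set.Iio ε} (h : α ≤ α) (v : X.G α) :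
    X.map h v = v := by
  rw [show h = le_refl α from rfl, X.map_id]; rfl

lemma tup_entry_congr {ε : Ordinal} {k : ℕ} (t : Tup ε k) {a b : Fin k}
    (h : (a:ℕ) = (b:ℕ)) : t.1 a = t.1 b := congrArg t.1 (Fin.ext h)

section Cone

variable {ε' : Ordinal} (top : Set.Iio ε')

def snocT {m : ℕ} (s : Tup ε' (m+1)) (hs : ∀ i, s.1 i < top) : Tup ε' (m+2) :=
  ⟨fun i => if h : (i:ℕ) < m+1 then s.1 ⟨i, h⟩ else top, by
    intro x y hxy
    have hxy' : (x:ℕ) < (y:ℕ) := hxy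
    dsimp only
    split_ifs with h1 h2 h2
    · exact s.2 (show (⟨x,h1⟩ : Fin (m+1)) < ⟨y,h2⟩ from hxy')
    · exact hs _
    · exact absurd hxy' (by have := y.isLt; omega)
    · exact absurd hxy' (by have := x.isLt; have := y.isLt; omega)⟩

lemma snocT_entry {m : ℕ} (s : Tup ε' (m+1)) (hs : ∀ i, s.1 i < top) (i : Fin (m+2)) :
    (snocT top s hs).1 i = if h : (i:ℕ) < m+1 then s.1 ⟨i, h⟩ else top := rfl

lemma snocT_entry0 {m : ℕ} (s : Tup ε' (m+1)) (hs : ∀ i, s.1 i < top) :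
    (snocT top s hs).1 0 = s.1 0 := by
  rw [snocT_entry, dif_pos (by simp)]
  exact tup_entry_congr s (by simp)

lemma faceT_snocT {m : ℕ} (t : Tup ε' (m+2)) (h : ∀ i, t.1 i < top) (i : Fin (m+2)) :
    faceT (snocT top t h) ⟨(i:ℕ), by have := i.isLt; omega⟩
      = snocT top (faceT t i) (fun x => h _) := by
  apply Subtype.ext
  funext x
  show (snocT top t h).1 ((⟨(i:ℕ), _⟩ : Fin (m+3)).succAbove x) = _
  erw [snocT_entry, snocT_entry]
  have hv := succAbove_val_or (⟨(i:ℕ), by have := i.isLt; omega⟩ : Fin (m+3)) x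
  simp only [Fin.val_mk] at hv
  have hx := x.isLt
  have hi := i.isLt
  split_ifs with h1 h2 h2
  · show t.1 _ = t.1 _
    apply tup_entry_congr
    have hv2 := succAbove_val_or i (⟨(x:ℕ), h2⟩ : Fin (m+1))
    simp only [Fin.val_mk] at hv2 ⊢
    omega
  · exfalso; omega
  · exfalso; omega
  · rfl

lemma faceT_snocT_last {m : ℕ} (t : Tup ε' (m+2)) (h : ∀ i, t.1 i < top) :
    faceT (snocT top t h) ⟨m+2, by omega⟩ = t := by
  apply Subtype.ext
  funext x
  show (snocT top t h).1 ((⟨m+2, _⟩ : Fin (m+3)).succAbove x) = _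
  rw [snocT_entry]
  have hv := succAbove_val_or (⟨m+2, by omega⟩ : Fin (m+3)) x
  simp only [Fin.val_mk] at hv
  have hx := x.isLt
  rw [dif_pos (by omega)]
  apply tup_entry_congr
  simp only [Fin.val_mk]
  omega

lemma snocT_faceT_last {m : ℕ} (t : Tup ε' (m+2)) (htl : t.1 ⟨m+1, by omega⟩ = top)
    (hs : ∀ i, (faceT t ⟨m+1, by omega⟩).1 i < top) :
    snocT top (faceT t ⟨m+1, by omega⟩) hs = t := by
  apply Subtype.ext
  funext x
  rw [snocT_entry]
  have hx := x.isLt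
  split_ifs with h1
  · show t.1 _ = t.1 _
    apply tup_entry_congr
    have hv := succAbove_val_or (⟨m+1, by omega⟩ : Fin (m+2)) (⟨(x:ℕ), h1⟩ : Fin (m+1))
    simp only [Fin.val_mk] at hv ⊢
    omega
  · rw [← htl]
    apply tup_entry_congr
    simp only [Fin.val_mk]
    omega

end Cone

lemma nested_term_eq {ε : Ordinal} {X : InvSys ε} {jj : ℕ} (cc : K X jj) {α β : Set.Iio ε}
    {u v : Tup ε (jj+1)} (huv : u = v) (h1 : α ≤ β) (h2 : β ≤ u.1 0) (h3 : α ≤ v.1 0)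
    {s s' r : ℤ} (hs : s * s' = r) :
    s • X.map h1 (s' • X.map h2 (cc u)) = r • X.map h3 (cc v) := by
  subst huv
  rw [map_zsmul, X.map_comp, smul_smul, hs]

lemma cone_vanish {ε' : Ordinal} (X : InvSys ε') (top : Set.Iio ε')
    (htop : ∀ a : Set.Iio ε', a ≤ top) (m : ℕ) : limVanishes X (m+1) := by
  classical
  intro c hc
  refine ⟨fun s => if h : ∀ i, s.1 i < top then
    ((-1:ℤ)^(m+1)) • X.map (le_of_eq (snocT_entry0 top s h).symm) (c (snocT top s h))
    else 0, ?_⟩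
  funext t
  set b : K X m := fun s => if h : ∀ i, s.1 i < top then
    ((-1:ℤ)^(m+1)) • X.map (le_of_eq (snocT_entry0 top s h).symm) (c (snocT top s h))
    else 0 with hbdef
  show dK X m b t = c t
  by_cases ht : ∀ i, t.1 i < top
  · -- all entries below top
    set u := snocT top t ht with hu
    have h0 : dK X (m+1) c u = 0 := by rw [hc]; rfl
    have e0 : t.1 0 ≤ u.1 0 := le_of_eq (snocT_entry0 top t ht).symm
    have hcu : ∑ i : Fin (m+3), (-1:ℤ)^(i:ℕ) •
        X.map (e0.trans (u.2.monotone (Fin.zero_le _))) (c (faceT u i)) = 0 := by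
      have h1 := congrArg (X.map e0) h0
      rw [map_zero] at h1
      rw [show dK X (m+1) c u = ∑ i : Fin (m+3), (-1:ℤ)^(i:ℕ) •
        X.map (u.2.monotone (Fin.zero_le _)) (c (faceT u i)) from rfl] at h1
      rw [map_sum] at h1
      refine Eq.trans (Finset.sum_congr rfl fun i _ => ?_) h1
      rw [map_zsmul]; erw [X.map_comp]
    rw [Fin.sum_univ_castSucc] at hcu
    simp only [Fin.coe_castSucc, Fin.val_last] at hcu
    show ∑ i : Fin (m+2), (-1:ℤ)^(i:ℕ) •
        X.map (t.2.monotone (Fin.zero_le _)) (b (faceT t i)) = c t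
    have step1 : ∀ i : Fin (m+2), (-1:ℤ)^(i:ℕ) •
        X.map (t.2.monotone (Fin.zero_le _)) (b (faceT t i))
        = ((-1:ℤ)^((i:ℕ)+(m+1))) •
            X.map (e0.trans (u.2.monotone (Fin.zero_le _))) (c (faceT u (Fin.castSucc i))) := by
      intro i
      have hb : b (faceT t i) = ((-1:ℤ)^(m+1)) •
          X.map (le_of_eq (snocT_entry0 top (faceT t i) (fun x => ht _)).symm)
            (c (snocT top (faceT t i) (fun x => ht _))) := dif_pos (fun x => ht _)
      rw [hb]
      exact nested_term_eq c (faceT_snocT top t ht i).symm _ _ _ (by rw [← pow_add])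
    rw [Finset.sum_congr rfl (fun i _ => step1 i)]
    have step2 : ∑ i : Fin (m+2), ((-1:ℤ)^((i:ℕ)+(m+1))) •
        X.map (e0.trans (u.2.monotone (Fin.zero_le _))) (c (faceT u (Fin.castSucc i)))
        = (-1:ℤ)^(m+1) • ∑ i : Fin (m+2), ((-1:ℤ)^((i:ℕ))) •
            X.map (e0.trans (u.2.monotone (Fin.zero_le _))) (c (faceT u (Fin.castSucc i))) := by
      rw [Finset.smul_sum]
      refine Finset.sum_congr rfl fun i _ => ?_
      rw [smul_smul, ← pow_add, Nat.add_comm (m+1) (i:ℕ)]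
    rw [step2]
    have step3 := eq_neg_of_add_eq_zero_left hcu
    rw [step3]
    have hTlast : X.map (e0.trans (u.2.monotone (Fin.zero_le ((Fin.last (m+2)).succAbove 0))))
        (c (faceT u (Fin.last (m+2)))) = c t := by
      have e : faceT u (Fin.last (m+2)) = t := faceT_snocT_last top t ht
      exact (map_congr_tup c e _ (le_refl (t.1 0))).trans (map_id_apply X _ _)
    rw [hTlast, smul_neg, smul_smul, ← pow_add]
    have : ((-1:ℤ)^((m+1)+(m+2))) = -1 := by
      have : Odd ((m+1)+(m+2)) := by exact ⟨m+1, by omega⟩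
      exact Odd.neg_one_pow this
    rw [this]
    simp
  · -- last entry is top
    push_neg at ht
    obtain ⟨i0, hi0⟩ := ht
    have hi0top : t.1 i0 = top := le_antisymm (htop _) hi0
    have hlast : t.1 ⟨m+1, by omega⟩ = top := by
      rcases eq_or_ne (i0 : ℕ) (m+1) with h | h
      · rw [← hi0top]; exact tup_entry_congr t (by simp [h])
      · exfalso
        have hlt : i0 < (⟨m+1, by omega⟩ : Fin (m+2)) := by
          have := i0.isLt; exact Fin.lt_def.2 (by simp; omega)
        have := t.2 hlt
        rw [hi0top] at this
        exact absurd (lt_of_lt_of_le this (htop _)) (lt_irrefl _)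
    have hothers : ∀ i : Fin (m+2), (i:ℕ) < m+1 → t.1 i < top := by
      intro i hi
      have hlt : i < (⟨m+1, by omega⟩ : Fin (m+2)) := Fin.lt_def.2 (by simp; omega)
      calc t.1 i < t.1 ⟨m+1, by omega⟩ := t.2 hlt
        _ = top := hlast
    show ∑ i : Fin (m+2), (-1:ℤ)^(i:ℕ) •
        X.map (t.2.monotone (Fin.zero_le _)) (b (faceT t i)) = c t
    rw [Fin.sum_univ_castSucc]
    have hzero : ∀ i : Fin (m+1), (-1:ℤ)^((Fin.castSucc i : ℕ)) •
        X.map (t.2.monotone (Fin.zero_le _)) (b (faceT t (Fin.castSucc i))) = 0 := by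
      intro i
      have hbz : b (faceT t (Fin.castSucc i)) = 0 := by
        refine dif_neg ?_
        intro hall
        have hent : (faceT t (Fin.castSucc i)).1 ⟨m, by omega⟩ = top := by
          rw [← hlast]
          show t.1 ((Fin.castSucc i).succAbove ⟨m, by omega⟩) = t.1 ⟨m+1, by omega⟩
          apply tup_entry_congr
          have hv := succAbove_val_or (Fin.castSucc i) (⟨m, by omega⟩ : Fin (m+1))
          simp only [Fin.coe_castSucc, Fin.val_mk] at hv
          have := i.isLt
          simp only [Fin.val_mk]
          omega
        have := hall ⟨m, by omega⟩
        rw [hent] at this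
        exact lt_irrefl _ this
      erw [hbz, map_zero, smul_zero]
    rw [Finset.sum_eq_zero (fun i _ => hzero i), zero_add]
    have hfacelt : ∀ x, (faceT t (Fin.last (m+1))).1 x < top := by
      intro x
      apply hothers
      have hv := succAbove_val_or (Fin.last (m+1)) x
      simp only [Fin.val_last] at hv
      have := x.isLt
      omega
    have hb : b (faceT t (Fin.last (m+1))) = ((-1:ℤ)^(m+1)) •
        X.map (le_of_eq (snocT_entry0 top (faceT t (Fin.last (m+1))) hfacelt).symm)
          (c (snocT top (faceT t (Fin.last (m+1))) hfacelt)) := dif_pos hfacelt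
    rw [hb]
    have heq : snocT top (faceT t (Fin.last (m+1))) hfacelt = t :=
      snocT_faceT_last top t hlast hfacelt
    have := nested_term_eq (X := X) c heq
      (t.2.monotone (Fin.zero_le ((Fin.last (m+1)).succAbove 0)))
      (le_of_eq (snocT_entry0 top (faceT t (Fin.last (m+1))) hfacelt).symm)
      (le_refl (t.1 0))
      (show ((-1:ℤ)^((Fin.last (m+1) : ℕ))) * ((-1:ℤ)^(m+1)) = (-1:ℤ)^((m+1)+(m+1)) by
        rw [Fin.val_last, ← pow_add])
    have hev : ((-1:ℤ)^((m+1)+(m+1))) = 1 := Even.neg_one_pow ⟨m+1, by omega⟩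
    exact this.trans (by rw [hev, one_smul, map_id_apply])

section Restrict

variable {ε : Ordinal}

def restrictSys (X : InvSys ε) (δ : Ordinal) (hδ : δ ≤ ε) : InvSys δ where
  G α := X.G ⟨α.1, lt_of_lt_of_le α.2 hδ⟩
  grp α := X.grp _
  map {α β} h := X.map (show (⟨α.1, lt_of_lt_of_le α.2 hδ⟩ : Set.Iio ε)
    ≤ ⟨β.1, lt_of_lt_of_le β.2 hδ⟩ from h)
  map_id α := X.map_id _
  map_comp h₁ h₂ x := X.map_comp _ _ x

def BelowT (δ : Ordinal) {m : ℕ} (t : Tup ε m) : Prop := ∀ i, ((t.1 i : Set.Iio ε) : Ordinal) < δ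

def liftTup {δ : Ordinal} (hδ : δ ≤ ε) {m : ℕ} (t : Tup δ m) : Tup ε m :=
  ⟨fun i => ⟨(t.1 i).1, lt_of_lt_of_le (t.1 i).2 hδ⟩, fun x y hxy => t.2 hxy⟩

def lowTup {δ : Ordinal} {m : ℕ} (t : Tup ε m) (h : BelowT δ t) : Tup δ m :=
  ⟨fun i => ⟨(t.1 i).1, h i⟩, fun x y hxy => t.2 hxy⟩

lemma liftTup_lowTup {δ : Ordinal} (hδ : δ ≤ ε) {m : ℕ} (t : Tup ε m) (h : BelowT δ t) :
    liftTup hδ (lowTup t h) = t := rfl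

lemma liftTup_below {δ : Ordinal} (hδ : δ ≤ ε) {m : ℕ} (t : Tup δ m) :
    BelowT δ (liftTup hδ t) := fun i => (t.1 i).2

def resK (X : InvSys ε) (δ : Ordinal) (hδ : δ ≤ ε) (j : ℕ) (z : K X j) :
    K (restrictSys X δ hδ) j := fun t => z (liftTup hδ t)

lemma resK_dK (X : InvSys ε) (δ : Ordinal) (hδ : δ ≤ ε) (j : ℕ) (z : K X j) :
    dK (restrictSys X δ hδ) j (resK X δ hδ j z) = resK X δ hδ (j+1) (dK X j z) := rfl

def extK (X : InvSys ε) (δ : Ordinal) (hδ : δ ≤ ε) (j : ℕ)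
    (a : K (restrictSys X δ hδ) j) : K X j :=
  fun t => @dite _ _ (Classical.propDecidable _) (fun h : BelowT δ t => a (lowTup t h)) (fun _ => 0)

lemma dK_extK (X : InvSys ε) (δ : Ordinal) (hδ : δ ≤ ε) (j : ℕ)
    (a : K (restrictSys X δ hδ) j) (t : Tup ε (j+2)) (h : BelowT δ t) :
    dK X j (extK X δ hδ j a) t = dK (restrictSys X δ hδ) j a (lowTup t h) := by
  refine Finset.sum_congr rfl fun i _ => ?_
  have hface : BelowT δ (faceT t i) := fun x => h _
  have hx : extK X δ hδ j a (faceT t i) = a (lowTup (faceT t i) hface) := dif_pos hface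
  show (-1:ℤ)^(i:ℕ) • X.map _ (extK X δ hδ j a (faceT t i)) = _
  rw [hx]
  rfl

lemma exact_below (X : InvSys ε) {δ : Ordinal} (hδ : δ ≤ ε) (j : ℕ)
    (hv : limVanishes (restrictSys X δ hδ) (j+1)) (z : K X (j+1))
    (hz : ∀ t : Tup ε (j+3), BelowT δ t → dK X (j+1) z t = 0) :
    ∃ a : K X j, ∀ t : Tup ε (j+2), BelowT δ t → dK X j a t = z t := by
  have hres : dK (restrictSys X δ hδ) (j+1) (resK X δ hδ (j+1) z) = 0 := by
    rw [resK_dK]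
    funext t
    exact hz (liftTup hδ t) (liftTup_below hδ t)
  obtain ⟨a', ha'⟩ := hv (resK X δ hδ (j+1) z) hres
  refine ⟨extK X δ hδ j a', fun t ht => ?_⟩
  rw [dK_extK X δ hδ j a' t ht, ha']
  rfl

lemma vanish_empty (X : InvSys (0:Ordinal)) (m : ℕ) : limVanishes X (m+1) := by
  intro c hc
  exact ⟨0, funext fun t => absurd (t.1 0).2 (fun h => not_lt_zero' (Set.mem_Iio.1 h))⟩

lemma dK_sub {ε : Ordinal} (X : InvSys ε) (j : ℕ) (p q : K X j) :
    dK X j (p - q) = dK X j p - dK X j q := by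
  funext t
  refine Eq.trans (Finset.sum_congr rfl fun i _ => ?_) (Finset.sum_sub_distrib (s := Finset.univ)
    (f := fun i : Fin (j+2) => (-1:ℤ)^(i:ℕ) • X.map (t.2.monotone (Fin.zero_le _)) (p (faceT t i)))
    (g := fun i : Fin (j+2) => (-1:ℤ)^(i:ℕ) • X.map (t.2.monotone (Fin.zero_le _)) (q (faceT t i))))
  rw [show (p - q) (faceT t i) = p (faceT t i) - q (faceT t i) from rfl]
  erw [map_sub, smul_sub]

end Restrict

section Glue

variable {ε : Ordinal}

def SolP (X : InvSys ε) (m : ℕ) (c : K X (m+2)) (δ : Ordinal) (b : K X (m+1)) : Prop :=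
  ∀ t : Tup ε (m+3), BelowT δ t → dK X (m+1) b t = c t

def AgrP (X : InvSys ε) (m : ℕ) (δ : Ordinal) (b b' : K X (m+1)) : Prop :=
  ∀ t : Tup ε (m+2), BelowT δ t → b t = b' t

lemma belowT_mono {δ δ' : Ordinal} (h : δ ≤ δ') {mm : ℕ} {t : Tup ε mm} (hb : BelowT δ t) :
    BelowT δ' t := fun i => lt_of_lt_of_le (hb i) h

lemma belowT_face {δ : Ordinal} {mm : ℕ} {t : Tup ε (mm+1)} (hb : BelowT δ t) (i : Fin (mm+1)) :
    BelowT δ (faceT t i) := fun x => hb _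

lemma belowT_of_last {δ : Ordinal} {mm : ℕ} {t : Tup ε (mm+1)}
    (h : ((t.1 (Fin.last mm) : Set.Iio ε) : Ordinal) < δ) : BelowT δ t := by
  intro i
  have : t.1 i ≤ t.1 (Fin.last mm) := t.2.monotone (Fin.le_last i)
  exact lt_of_le_of_lt this h

lemma main_glue (X : InvSys ε) (m : ℕ) (θ : Ordinal.{0}) (hθlim : Order.IsSuccLimit θ)
    (F : Ordinal.{0} → Ordinal.{0})
    (hFlt : ∀ ξ, ξ < θ → F ξ < ε)
    (hFmono : ∀ η ξ, η < ξ → F η < F ξ)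
    (hcof : ∀ α, α < ε → ∃ ξ, ξ < θ ∧ α < F ξ)
    (hcont : ∀ ξ, Order.IsSuccLimit ξ → ∀ α, α < F ξ → ∃ η, η < ξ ∧ α < F η)
    (hseg : ∀ ξ (hξ : ξ < θ), ∀ j : ℕ, m ≤ j →
      limVanishes (restrictSys X (F ξ) (hFlt ξ hξ).le) (j+1)) :
    limVanishes X (m+2) := by
  intro c hc
  haveI : Nonempty (K X (m+1)) := ⟨0⟩
  -- the recursively defined family of partial solutions
  set B : Ordinal → K X (m+1) := Ordinal.lt_wf.fix (C := fun _ => K X (m+1))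
    (fun ξ IH => Classical.epsilon (fun b =>
      (ξ < θ → SolP X m c (F ξ) b) ∧ ∀ η (h1 : η < ξ), η < θ → AgrP X m (F η) b (IH η h1)))
    with hBdef
  have hBeq : ∀ ξ, B ξ = Classical.epsilon (fun b =>
      (ξ < θ → SolP X m c (F ξ) b) ∧ ∀ η (h1 : η < ξ), η < θ → AgrP X m (F η) b (B η)) := by
    intro ξ
    rw [hBdef]
    exact WellFounded.fix_eq _ _ _
  -- the key invariant, proven by transfinite induction
  have SpecB : ∀ ξ, (ξ < θ → SolP X m c (F ξ) (B ξ)) ∧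
      (∀ η, η < ξ → η < θ → AgrP X m (F η) (B ξ) (B η)) := by
    intro ξ
    induction ξ using Ordinal.induction with
    | h ξ IH =>
    have hex : ∃ b : K X (m+1),
        (ξ < θ → SolP X m c (F ξ) b) ∧ ∀ η (h1 : η < ξ), η < θ → AgrP X m (F η) b (B η) := by
      by_cases hξθ : ξ < θ
      · rcases Ordinal.zero_or_succ_or_isSuccLimit ξ with hz | ⟨η₀, rfl⟩ | hlim
        · -- ξ = 0
          subst hz
          obtain ⟨b, hb⟩ := exact_below X (hFlt 0 hξθ).le (m+1)
            (hseg 0 hξθ (m+1) (by omega)) c (fun t _ => by rw [hc]; rfl)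
          exact ⟨b, fun _ => hb, fun η h1 => absurd h1 (not_lt_zero' (a := η))⟩
        · -- successor
          have hη₀θ : η₀ < θ := lt_trans (Order.lt_succ η₀) hξθ
          obtain ⟨b', hb'⟩ := exact_below X (hFlt _ hξθ).le (m+1)
            (hseg _ hξθ (m+1) (by omega)) c (fun t _ => by rw [hc]; rfl)
          have hz : ∀ t : Tup ε (m+3), BelowT (F η₀) t →
              dK X (m+1) (b' - B η₀) t = 0 := by
            intro t ht
            rw [dK_sub]
            rw [show (dK X (m+1) b' - dK X (m+1) (B η₀)) t
              = dK X (m+1) b' t - dK X (m+1) (B η₀) t from rfl]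
            rw [hb' t (belowT_mono (hFmono η₀ _ (Order.lt_succ η₀)).le ht),
              (IH η₀ (Order.lt_succ η₀)).1 hη₀θ t ht, sub_self]
          obtain ⟨a, ha⟩ := exact_below X (hFlt η₀ hη₀θ).le m
            (hseg η₀ hη₀θ m (le_refl m)) (b' - B η₀) hz
          refine ⟨b' - dK X m a, fun _ => ?_, ?_⟩
          · intro t ht
            rw [dK_sub]
            rw [show (dK X (m+1) b' - dK X (m+1) (dK X m a)) t
              = dK X (m+1) b' t - dK X (m+1) (dK X m a) t from rfl]
            rw [hb' t ht, dK_dK, sub_zero]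
          · intro η h1 hηθ t ht
            have hηη₀ : η ≤ η₀ := Order.lt_succ_iff.1 h1
            have htη₀ : BelowT (F η₀) t := by
              rcases lt_or_eq_of_le hηη₀ with h | h
              · exact belowT_mono (hFmono η η₀ h).le ht
              · rwa [← h]
            have : (b' - dK X m a) t = b' t - dK X m a t := rfl
            rw [this, ha t htη₀,
              show (b' - B η₀) t = b' t - B η₀ t from rfl]
            have hBη₀ : B η₀ t = B η t := by
              rcases lt_or_eq_of_le hηη₀ with h | h
              · exact (IH η₀ (Order.lt_succ η₀)).2 η h hηθ t ht
              · rw [h]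
            rw [sub_sub_cancel, hBη₀]
        · -- limit, below θ
          classical
          set b0 : K X (m+1) := fun t =>
            if h : ∃ η, η < ξ ∧ BelowT (F η) t then B h.choose t else 0 with hb0
          have keyB : ∀ (t : Tup ε (m+2)) η, η < ξ → BelowT (F η) t → b0 t = B η t := by
            intro t η hη hbt
            have hex2 : ∃ η, η < ξ ∧ BelowT (F η) t := ⟨η, hη, hbt⟩
            rw [hb0]
            show (if h : ∃ η, η < ξ ∧ BelowT (F η) t then B h.choose t else 0) = B η t
            rw [dif_pos hex2]
            obtain ⟨hη₁ξ, hbt₁⟩ := hex2.choose_spec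
            set η₁ := hex2.choose with hη₁
            rcases lt_trichotomy η₁ η with h | h | h
            · exact ((IH η hη).2 η₁ h (lt_trans hη₁ξ hξθ) t hbt₁).symm
            · rw [h]
            · exact ((IH η₁ hη₁ξ).2 η h (lt_trans hη hξθ) t hbt)
          refine ⟨b0, ?_, ?_⟩
          · intro _ t htb
            obtain ⟨η, hηξ, hαη⟩ := hcont ξ hlim
              ((t.1 (Fin.last (m+2)) : Set.Iio ε) : Ordinal) (htb _)
            have hbtη : BelowT (F η) t := belowT_of_last hαη
            have hd : dK X (m+1) b0 t = dK X (m+1) (B η) t := by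
              refine Finset.sum_congr rfl fun i _ => ?_
              rw [keyB (faceT t i) η hηξ (belowT_face hbtη i)]
            rw [hd]
            exact (IH η hηξ).1 (lt_trans hηξ hξθ) t hbtη
          · intro η h1 hηθ t ht
            exact keyB t η h1 ht
      · -- ξ ≥ θ : glue over all η < θ
        classical
        set b0 : K X (m+1) := fun t =>
          if h : ∃ η, η < θ ∧ BelowT (F η) t then B h.choose t else 0 with hb0
        refine ⟨b0, fun h => absurd h hξθ, ?_⟩
        intro η h1 hηθ t ht
        have hex2 : ∃ η, η < θ ∧ BelowT (F η) t := ⟨η, hηθ, ht⟩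
        rw [hb0]
        show (if h : ∃ η, η < θ ∧ BelowT (F η) t then B h.choose t else 0) = B η t
        rw [dif_pos hex2]
        obtain ⟨hη₁θ, hbt₁⟩ := hex2.choose_spec
        set η₁ := hex2.choose with hη₁
        have hη₁ξ : η₁ < ξ := lt_of_lt_of_le hη₁θ (le_of_not_gt hξθ)
        rcases lt_trichotomy η₁ η with h | h | h
        · exact ((IH η h1).2 η₁ h hη₁θ t hbt₁).symm
        · rw [h]
        · exact ((IH η₁ hη₁ξ).2 η h hηθ t ht)
    have := Classical.epsilon_spec hex
    rw [← hBeq ξ] at this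
    exact this
  -- assemble the global solution
  refine ⟨B θ, ?_⟩
  funext t
  obtain ⟨η, hηθ, hαη⟩ := hcof ((t.1 (Fin.last (m+2)) : Set.Iio ε) : Ordinal) (t.1 _).2
  have hbtη : BelowT (F η) t := belowT_of_last hαη
  have : dK X (m+1) (B θ) t = dK X (m+1) (B η) t := by
    refine Finset.sum_congr rfl fun i _ => ?_
    rw [(SpecB θ).2 η hηθ hηθ (faceT t i) (belowT_face hbtη i)]
  rw [this]
  exact (SpecB η).1 hηθ t hbtη

end Glue

lemma exists_F (ε : Ordinal.{0}) (hlim : Order.IsSuccLimit ε) :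
    ∃ F : Ordinal.{0} → Ordinal.{0},
      (∀ ξ, ξ < (ε.cof).ord → F ξ < ε) ∧
      (∀ η ξ, η < ξ → F η < F ξ) ∧
      (∀ α, α < ε → ∃ ξ, ξ < (ε.cof).ord ∧ α < F ξ) ∧
      (∀ ξ, Order.IsSuccLimit ξ → ∀ α, α < F ξ → ∃ η, η < ξ ∧ α < F η) ∧
      (F 0 = 0) ∧
      (∀ ξ, ∃ δ, F (Order.succ ξ) = Order.succ δ) ∧
      (∀ ξ, Order.IsSuccLimit ξ → (F ξ).cof ≤ ξ.card) := by
  classical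
  obtain ⟨g, hg⟩ := Ordinal.exists_blsub_cof ε
  have θlim : Order.IsSuccLimit (ε.cof).ord := Cardinal.isSuccLimit_ord (Ordinal.aleph0_le_cof.2 hlim)
  set F : Ordinal.{0} → Ordinal.{0} := fun ξ => Ordinal.limitRecOn (motive := fun _ => Ordinal) ξ 0
    (fun η IH => (max IH (if h : η < (ε.cof).ord then g η h else 0)) + 1)
    (fun η _ f => Ordinal.bsup η f) with hF
  have Fzero : F 0 = 0 := Ordinal.limitRecOn_zero _ _ _
  have Fsucc : ∀ η, F (Order.succ η)
      = (max (F η) (if h : η < (ε.cof).ord then g η h else 0)) + 1 :=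
    fun η => Ordinal.limitRecOn_succ _ _ _ _
  have Flim : ∀ η, Order.IsSuccLimit η → F η = Ordinal.bsup η (fun o _ => F o) :=
    fun η h => Ordinal.limitRecOn_limit _ _ _ _ h
  have hmono : ∀ ξ η, η < ξ → F η < F ξ := by
    intro ξ
    induction ξ using Ordinal.limitRecOn with
    | zero => intro η h; exact absurd h (not_lt_zero' (a := η))
    | add_one ξ IH =>
      rw [Ordinal.add_one_eq_succ]
      intro η hη
      have hle : F η ≤ F ξ := by
        rcases (Order.lt_succ_iff.1 hη).lt_or_eq with h | h
        · exact (IH η h).le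
        · exact le_of_eq (congrArg F h)
      have h2 : F η ≤ max (F ξ) (if h : ξ < (ε.cof).ord then g ξ h else 0) :=
        hle.trans (le_max_left _ _)
      rw [Fsucc ξ]
      exact lt_of_le_of_lt h2 (by rw [Ordinal.add_one_eq_succ]; exact Order.lt_succ _)
    | limit ξ hl IH =>
      intro η hη
      have h1 : F η < F (Order.succ η) := IH (Order.succ η) (hl.succ_lt hη) η (Order.lt_succ η)
      have h2 : F (Order.succ η) ≤ Ordinal.bsup ξ (fun o _ => F o) :=
        Ordinal.le_bsup _ _ (hl.succ_lt hη)
      rw [Flim ξ hl]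
      exact lt_of_lt_of_le h1 h2
  have hFlt : ∀ ξ, ξ < (ε.cof).ord → F ξ < ε := by
    intro ξ
    induction ξ using Ordinal.limitRecOn with
    | zero => intro _; rw [Fzero]; exact hlim.pos
    | add_one ξ IH =>
      rw [Ordinal.add_one_eq_succ]
      intro hs
      have hξ : ξ < (ε.cof).ord := lt_trans (Order.lt_succ ξ) hs
      rw [Fsucc]
      have h1 : F ξ < ε := IH hξ
      have h2 : (if h : ξ < (ε.cof).ord then g ξ h else 0) < ε := by
        rw [dif_pos hξ]
        have := Ordinal.lt_blsub g ξ hξ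
        rwa [hg] at this
      rw [Ordinal.add_one_eq_succ]
      exact hlim.succ_lt (max_lt h1 h2)
    | limit ξ hl IH =>
      intro hξθ
      rw [Flim ξ hl]
      exact Ordinal.bsup_lt_ord (Cardinal.lt_ord.1 hξθ)
        (fun i hi => IH i hi (lt_trans hi hξθ))
  refine ⟨F, hFlt, fun η ξ h => hmono ξ η h, ?_, ?_, Fzero, ?_, ?_⟩
  · intro α hα
    rw [← hg] at hα
    obtain ⟨i, hi, hle⟩ := Ordinal.lt_blsub_iff.1 hα
    refine ⟨Order.succ i, θlim.succ_lt hi, ?_⟩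
    rw [Fsucc]
    have h3 : α ≤ max (F i) (if h : i < (ε.cof).ord then g i h else 0) := by
      rw [dif_pos hi]
      exact hle.trans (le_max_right _ _)
    rw [Ordinal.add_one_eq_succ]
    exact lt_of_le_of_lt h3 (Order.lt_succ _)
  · intro ξ hl α hα
    rw [Flim ξ hl] at hα
    obtain ⟨i, hi, h⟩ := (Ordinal.lt_bsup _).1 hα
    exact ⟨i, hi, h⟩
  · intro ξ
    exact ⟨_, by rw [Fsucc, Ordinal.add_one_eq_succ]⟩
  · intro ξ hl
    rw [Flim ξ hl]
    apply Ordinal.cof_bsup_le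
    intro i h
    exact lt_of_lt_of_le (hmono (Order.succ i) i (Order.lt_succ i))
      (Ordinal.le_bsup _ _ (hl.succ_lt h))

lemma vanish_of_eps_zero {ε' : Ordinal} (h : ε' = 0) (X : InvSys ε') (m : ℕ) :
    limVanishes X (m+1) := by
  subst h
  exact vanish_empty X m

lemma vanish_of_eps_succ {ε' : Ordinal} {δ : Ordinal} (h : ε' = Order.succ δ)
    (X : InvSys ε') (m : ℕ) : limVanishes X (m+1) := by
  subst h
  refine cone_vanish X ⟨δ, Order.lt_succ δ⟩ (fun a => ?_) m
  rcases a with ⟨av, ha⟩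
  exact Subtype.mk_le_mk.2 (Order.lt_succ_iff.1 ha)

lemma main_step (k : ℕ)
    (IH : k ≠ 0 → ∀ (ε : Ordinal.{0}) (X : InvSys ε) (n : ℕ),
      (k-1) + 1 < n → ε.cof ≤ Cardinal.aleph (((k-1 : ℕ)) : Ordinal) → limVanishes X n) :
    ∀ (ε : Ordinal.{0}) (X : InvSys ε) (n : ℕ),
      k + 1 < n → ε.cof ≤ Cardinal.aleph k → limVanishes X n := by
  intro ε X n hn hcof
  rcases Ordinal.zero_or_succ_or_isSuccLimit ε with h0 | ⟨δ, hδ⟩ | hlim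
  · obtain ⟨m, rfl⟩ : ∃ m, n = m+1 := ⟨n-1, by omega⟩
    exact vanish_of_eps_zero h0 X m
  · obtain ⟨m, rfl⟩ : ∃ m, n = m+1 := ⟨n-1, by omega⟩
    exact vanish_of_eps_succ hδ.symm X m
  · obtain ⟨m, rfl⟩ : ∃ m, n = m+2 := ⟨n-2, by omega⟩
    obtain ⟨F, hFlt, hFmono, hFcof, hFcont, hF0, hFsucc, hFcoflim⟩ := exists_F ε hlim
    have θlim : Order.IsSuccLimit (ε.cof).ord := Cardinal.isSuccLimit_ord (Ordinal.aleph0_le_cof.2 hlim)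
    refine main_glue X m (ε.cof).ord θlim F hFlt hFmono hFcof hFcont ?_
    intro ξ hξ j hj
    rcases Ordinal.zero_or_succ_or_isSuccLimit ξ with hz | ⟨η, hη⟩ | hl
    · exact vanish_of_eps_zero (by rw [hz, hF0]) _ j
    · obtain ⟨δ', hδ'⟩ := hFsucc η
      exact vanish_of_eps_succ (by rw [← hη, hδ']) _ j
    · -- limit stage: use the induction hypothesis at k-1
      have hcard : ξ.card < Cardinal.aleph k :=
        lt_of_lt_of_le (Cardinal.lt_ord.1 hξ) hcof
      rcases Nat.eq_zero_or_pos k with hk0 | hkpos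
      · exfalso
        subst hk0
        have h1 : (Cardinal.aleph 0) ≤ ξ.card := by
          rw [Cardinal.aleph_zero]
          rw [Ordinal.aleph0_le_card]
          exact Ordinal.omega0_le_of_isSuccLimit hl
        exact absurd hcard (not_lt.2 h1)
      · obtain ⟨k', rfl⟩ : ∃ k', k = k'+1 := ⟨k-1, by omega⟩
        have hcof' : (F ξ).cof ≤ Cardinal.aleph k' := by
          have h1 : (F ξ).cof ≤ ξ.card := hFcoflim ξ hl
          have h2 : ξ.card < Cardinal.aleph ((k'+1 : ℕ)) := hcard
          have hcast : (((k'+1 : ℕ)) : Ordinal) = Order.succ ((k' : ℕ) : Ordinal) := by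
            rw [Nat.cast_add, Nat.cast_one, Ordinal.add_one_eq_succ]
          rw [hcast, Cardinal.aleph_succ, Order.lt_succ_iff] at h2
          exact h1.trans h2
        exact IH (by omega) (F ξ) _ (j+1) (by omega) (by simpa using hcof')

theorem main_all : ∀ (k : ℕ) (ε : Ordinal.{0}) (X : InvSys ε) (n : ℕ),
    k + 1 < n → ε.cof ≤ Cardinal.aleph k → limVanishes X n := by
  intro k
  induction k with
  | zero =>
    exact main_step 0 (fun h => absurd rfl h)
  | succ k IHk =>
    exact main_step (k+1) (fun _ => by simpa using IHk)


/-- (Goblot) If `ε` has cofinality `ℵ_k` (`k` a natural number), then the cohomological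
dimension of `ε` is at most `k + 1`: `lim^n X = 0` for every inverse system `X` of
abelian groups over `ε` and every `n > k + 1`. -/
theorem stmt5 (ε : Ordinal) (k : ℕ) (hcof : ε.cof = Cardinal.aleph k) :
    ∀ (X : InvSys ε) (n : ℕ), k + 1 < n → limVanishes X n := by
  intro X n hn
  exact main_all k ε X n hn (le_of_eq hcof)
end
end

section
/- ω₁, the least uncountable ordinal, is the least ordinal admitting no good graph: every countable ordinal admits a good graph, and there is no good graph on ω₁. -/
noncomputable section

/-- A graph on an ordinal `γ` (i.e., a simple graph whose vertices are the ordinals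
below `γ`) is *good* if it contains no cycles and, for every `α < γ`, its induced
subgraph on the tail `[α, γ)` is connected. -/
def GoodGraph (γ : Ordinal) (G : SimpleGraph ↥(Set.Iio γ)) : Prop :=
  G.IsAcyclic ∧
    ∀ α : ↥(Set.Iio γ), (G.induce {β : ↥(Set.Iio γ) | α.1 ≤ β.1}).Connected

namespace Good12

open Function Set SimpleGraph

variable {V : Type*} [LinearOrder V]

open scoped Classical

lemma image_nonempty (e : V ↪ ℕ) {x : V} (h : ∃ w, x < w) :
    ((fun w => e w) '' {w | x < w}).Nonempty :=
  ⟨e h.choose, ⟨h.choose, h.choose_spec, rfl⟩⟩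

/-- The element above `x` with minimal `e`-value (or `x` itself if `x` is maximal). -/
noncomputable def nxt (e : V ↪ ℕ) (x : V) : V :=
  if h : ∃ w, x < w then
    ((Set.mem_image _ _ _).mp (Nat.sInf_mem (image_nonempty e h))).choose
  else x

lemma nxt_spec (e : V ↪ ℕ) {x : V} (h : ∃ w, x < w) :
    x < nxt e x ∧ e (nxt e x) = sInf ((fun w => e w) '' {w | x < w}) := by
  rw [nxt, dif_pos h]
  obtain ⟨h1, h2⟩ := ((Set.mem_image _ _ _).mp (Nat.sInf_mem (image_nonempty e h))).choose_spec
  exact ⟨h1, h2⟩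

lemma lt_nxt (e : V ↪ ℕ) {x : V} (h : ∃ w, x < w) : x < nxt e x := (nxt_spec e h).1

lemma nxt_min (e : V ↪ ℕ) {x w : V} (hw : x < w) : e (nxt e x) ≤ e w := by
  rw [(nxt_spec e ⟨w, hw⟩).2]
  exact Nat.sInf_le ⟨w, hw, rfl⟩

lemma le_nxt (e : V ↪ ℕ) (x : V) : x ≤ nxt e x := by
  by_cases h : ∃ w, x < w
  · exact (lt_nxt e h).le
  · rw [nxt, dif_neg h]

lemma le_iter {f : V → V} (hf : ∀ x, x ≤ f x) (x : V) (k : ℕ) : x ≤ f^[k] x := by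
  induction k with
  | zero => simp
  | succ k ih =>
    rw [Function.iterate_succ_apply']
    exact ih.trans (hf _)

lemma exists_iter_ge (e : V ↪ ℕ) (a z : V) : ∃ k, z ≤ (nxt e)^[k] a := by
  by_contra hcon
  push_neg at hcon
  have hstep : ∀ k, (nxt e)^[k] a < (nxt e)^[k + 1] a := fun k => by
    rw [Function.iterate_succ_apply']
    exact lt_nxt e ⟨z, hcon k⟩
  have hmono : StrictMono (fun k => (nxt e)^[k] a) := strictMono_nat_of_lt_succ hstep
  have hlt : ∀ k : ℕ, e ((nxt e)^[k + 1] a) < e z := by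
    intro k
    have h2 : e (nxt e ((nxt e)^[k] a)) ≤ e z := nxt_min e (hcon k)
    have h2' : e ((nxt e)^[k + 1] a) ≤ e z := by
      rw [Function.iterate_succ_apply']; exact h2
    refine lt_of_le_of_ne h2' fun heq => ?_
    exact lt_irrefl z ((e.injective heq) ▸ hcon (k + 1))
  obtain ⟨i, j, hne, hij⟩ :=
    Finite.exists_ne_map_eq_of_infinite (fun k : ℕ => (⟨_, hlt k⟩ : Fin (e z)))
  apply hne
  have h3 : (nxt e)^[i + 1] a = (nxt e)^[j + 1] a :=
    e.injective (congrArg Fin.val hij)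
  exact Nat.succ_injective (hmono.injective h3)

lemma merge_of_le (e : V ↪ ℕ) {a b : V} (hab : a ≤ b) :
    ∃ m n, (nxt e)^[m] a = (nxt e)^[n] b := by
  have hex := exists_iter_ge e a b
  have hkb : b ≤ (nxt e)^[Nat.find hex] a := Nat.find_spec hex
  rcases eq_or_lt_of_le hkb with heq | hlt
  · exact ⟨Nat.find hex, 0, heq.symm⟩
  · have hk0 : Nat.find hex ≠ 0 := by
      intro h0
      rw [h0] at hlt
      simp only [Function.iterate_zero_apply] at hlt
      exact absurd hab (not_le_of_gt hlt)
    obtain ⟨k', hkk⟩ := Nat.exists_eq_succ_of_ne_zero hk0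
    have hprev : (nxt e)^[k'] a < b := by
      have h4 := Nat.find_min hex (m := k') (by omega)
      push_neg at h4
      exact h4
    have hsucc : (nxt e)^[Nat.find hex] a = nxt e ((nxt e)^[k'] a) := by
      rw [hkk, Function.iterate_succ_apply']
    rw [hsucc] at hlt
    have hbn : b < nxt e b := lt_nxt e ⟨_, hlt⟩
    have h1 : e (nxt e ((nxt e)^[k'] a)) ≤ e (nxt e b) := nxt_min e (hprev.trans hbn)
    have h2 : e (nxt e b) ≤ e (nxt e ((nxt e)^[k'] a)) := nxt_min e hlt
    have h3 : nxt e ((nxt e)^[k'] a) = nxt e b := e.injective (le_antisymm h1 h2)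
    exact ⟨Nat.find hex, 1, by rw [hsucc, h3, Function.iterate_one]⟩

lemma merge (e : V ↪ ℕ) (a b : V) : ∃ m n, (nxt e)^[m] a = (nxt e)^[n] b := by
  rcases le_total a b with h | h
  · exact merge_of_le e h
  · obtain ⟨m, n, hmn⟩ := merge_of_le e h
    exact ⟨n, m, hmn.symm⟩

/-- The good graph associated to an embedding `e : V ↪ ℕ`. -/
def graph (e : V ↪ ℕ) : SimpleGraph V := SimpleGraph.fromRel fun a b => nxt e a = b

lemma adj_up (e : V ↪ ℕ) {a b : V} (h : (graph e).Adj a b) (hab : a < b) : nxt e a = b := by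
  rcases h with ⟨hne, h | h⟩
  · exact h
  · exact absurd (h ▸ le_nxt e b) (not_le_of_gt hab)

lemma first_edge (e : V ↪ ℕ) {m y : V} (d : (graph e).Walk m y) (hnn : ¬d.Nil)
    (hsupp : ∀ x ∈ d.support, m ≤ x) : s(m, nxt e m) ∈ d.edges := by
  cases d with
  | nil => exact absurd Walk.Nil.nil hnn
  | cons hadj q =>
    rename_i b
    have hb : m < b := lt_of_le_of_ne
      (hsupp b (by rw [Walk.support_cons]; exact List.mem_cons_of_mem _ q.start_mem_support))
      hadj.ne
    have hbn : nxt e m = b := adj_up e hadj hb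
    rw [hbn, Walk.edges_cons]
    exact List.mem_cons_self

lemma acyclic (e : V ↪ ℕ) : (graph e).IsAcyclic := by
  intro v c hc
  obtain ⟨m, hm, hmin⟩ := Finset.exists_min_image c.support.toFinset id
    ⟨v, List.mem_toFinset.mpr c.start_mem_support⟩
  replace hm := List.mem_toFinset.mp hm
  have hmin' : ∀ x ∈ c.support, m ≤ x := fun x hx => hmin x (List.mem_toFinset.mpr hx)
  have hd : (c.rotate m hm).IsCycle := hc.rotate hm
  have hsupp : ∀ x ∈ (c.rotate m hm).support, m ≤ x := by
    intro x hx
    rw [Walk.support_eq_cons] at hx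
    rcases List.mem_cons.mp hx with rfl | hx
    · exact le_refl _
    · exact hmin' x (List.mem_of_mem_tail (((Walk.support_rotate c m hm).mem_iff).mp hx))
  revert hd hsupp
  generalize c.rotate m hm = d
  intro hd hsupp
  cases d with
  | nil => exact hd.ne_nil rfl
  | cons hadj q =>
    rename_i b
    have hb : m < b := lt_of_le_of_ne
      (hsupp b (by rw [Walk.support_cons]; exact List.mem_cons_of_mem _ q.start_mem_support))
      hadj.ne
    have hbn : nxt e m = b := adj_up e hadj hb
    have hnodup := hd.isCircuit.isTrail.edges_nodup
    rw [Walk.edges_cons] at hnodup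
    have hnotmem : s(m, b) ∉ q.edges := (List.nodup_cons.mp hnodup).1
    have hqnn : ¬q.reverse.Nil := Walk.not_nil_of_ne hb.ne
    have hsupp' : ∀ x ∈ q.reverse.support, m ≤ x := by
      intro x hx
      rw [Walk.support_reverse, List.mem_reverse] at hx
      exact hsupp x (by rw [Walk.support_cons]; exact List.mem_cons_of_mem _ hx)
    have hfe := first_edge e q.reverse hqnn hsupp'
    rw [hbn, Walk.edges_reverse, List.mem_reverse] at hfe
    exact hnotmem hfe

lemma reach_iter (e : V ↪ ℕ) {T : Set V} (hT : ∀ ⦃x y : V⦄, x ∈ T → x ≤ y → y ∈ T)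
    {x : V} (hx : x ∈ T) (k : ℕ) :
    ((graph e).induce T).Reachable ⟨x, hx⟩ ⟨(nxt e)^[k] x, hT hx (le_iter (le_nxt e) x k)⟩ := by
  induction k with
  | zero => exact Reachable.refl _
  | succ k ih =>
    refine ih.trans ?_
    rcases eq_or_ne ((nxt e)^[k] x) ((nxt e)^[k + 1] x) with h | h
    · have h2 : (⟨(nxt e)^[k] x, hT hx (le_iter (le_nxt e) x k)⟩ : ↥T)
          = ⟨(nxt e)^[k + 1] x, hT hx (le_iter (le_nxt e) x (k + 1))⟩ := Subtype.ext h
      rw [← h2]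
    · apply Adj.reachable
      show (graph e).Adj ((nxt e)^[k] x) ((nxt e)^[k + 1] x)
      exact ⟨h, Or.inl (Function.iterate_succ_apply' _ _ _).symm⟩

lemma tails_connected (e : V ↪ ℕ) {T : Set V} (hT : ∀ ⦃x y : V⦄, x ∈ T → x ≤ y → y ∈ T)
    (hne : T.Nonempty) : ((graph e).induce T).Connected := by
  haveI : Nonempty ↥T := hne.to_subtype
  refine ⟨fun v w => ?_⟩
  obtain ⟨m, n, hmn⟩ := merge e v.1 w.1
  have r1 := reach_iter e hT v.2 m
  have r2 := reach_iter e hT w.2 n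
  have r3 : ((graph e).induce T).Reachable
      ⟨(nxt e)^[m] v.1, hT v.2 (le_iter (le_nxt e) v.1 m)⟩
      ⟨(nxt e)^[n] w.1, hT w.2 (le_iter (le_nxt e) w.1 n)⟩ := by
    have h2 : (⟨(nxt e)^[m] v.1, hT v.2 (le_iter (le_nxt e) v.1 m)⟩ : ↥T)
        = ⟨(nxt e)^[n] w.1, hT w.2 (le_iter (le_nxt e) w.1 n)⟩ := Subtype.ext hmn
    rw [h2]
  exact r1.trans (r3.trans r2.symm)

end Good12

open Good12 in
/-- `ω₁` is the least ordinal admitting no good graph: every countable ordinal admits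
a good graph, while `ω₁` admits none. -/
theorem stmt12 :
    (∀ γ : Ordinal, γ < (Cardinal.aleph 1).ord →
      ∃ G : SimpleGraph ↥(Set.Iio γ), GoodGraph γ G) ∧
    ¬ ∃ G : SimpleGraph ↥(Set.Iio ((Cardinal.aleph 1).ord)),
        GoodGraph ((Cardinal.aleph 1).ord) G := by
  constructor
  · -- every countable ordinal admits a good graph
    intro γ hγ
    have hcard : γ.card ≤ Cardinal.aleph0 := by
      have h := Cardinal.lt_ord.mp hγ
      rwa [← Cardinal.succ_aleph0, Order.lt_succ_iff] at h
    have hcnt : Countable ↥(Set.Iio γ) := by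
      rw [← Cardinal.mk_le_aleph0_iff, Ordinal.mk_Iio_ordinal]
      calc Cardinal.lift γ.card ≤ Cardinal.lift Cardinal.aleph0 := Cardinal.lift_le.mpr hcard
        _ = Cardinal.aleph0 := Cardinal.lift_aleph0
    obtain ⟨e⟩ := nonempty_embedding_nat ↥(Set.Iio γ)
    refine ⟨Good12.graph e, Good12.acyclic e, fun α => Good12.tails_connected e ?_
      ⟨α, le_refl α.1⟩⟩
    intro x y hx hxy
    exact le_trans hx (Subtype.coe_le_coe.2 hxy)
  · -- no good graph on ω₁
    rintro ⟨G, hAc, hConn⟩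
    have hΩ : Order.IsSuccLimit ((Cardinal.aleph 1).ord) :=
      Cardinal.isSuccLimit_ord (Cardinal.aleph0_le_aleph 1)
    have hsucc : ∀ v : ↥(Set.Iio ((Cardinal.aleph 1).ord)),
        v.1 + 1 < (Cardinal.aleph 1).ord := fun v => by
      rw [Ordinal.add_one_eq_succ]
      exact hΩ.succ_lt v.2
    have hlt1 : ∀ v : ↥(Set.Iio ((Cardinal.aleph 1).ord)), v.1 < v.1 + 1 := fun v => by
      rw [Ordinal.add_one_eq_succ]
      exact Order.lt_succ _
    -- every vertex has a neighbor above it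
    have upN : ∀ v : ↥(Set.Iio ((Cardinal.aleph 1).ord)), ∃ w, G.Adj v w ∧ v < w := by
      intro v
      have hmem1 : v ∈ {β : ↥(Set.Iio ((Cardinal.aleph 1).ord)) | v.1 ≤ β.1} := le_refl v.1
      have hmem2 : (⟨v.1 + 1, hsucc v⟩ : ↥(Set.Iio ((Cardinal.aleph 1).ord)))
          ∈ {β : ↥(Set.Iio ((Cardinal.aleph 1).ord)) | v.1 ≤ β.1} := (hlt1 v).le
      obtain ⟨p⟩ := (hConn v).preconnected ⟨v, hmem1⟩ ⟨_, hmem2⟩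
      have hnn : ¬p.Nil := by
        apply SimpleGraph.Walk.not_nil_of_ne
        intro h
        have h2 := congrArg (fun z => z.1.1) h
        exact absurd h2 (ne_of_lt (hlt1 v))
      obtain ⟨b, hadj, q, hp⟩ := SimpleGraph.Walk.not_nil_iff.mp hnn
      refine ⟨b.1, hadj, ?_⟩
      refine lt_of_le_of_ne b.2 fun h => ?_
      exact hadj.ne (Subtype.ext h)
    -- uniqueness of the neighbor above
    have up_unique : ∀ v a b, G.Adj v a → v < a → G.Adj v b → v < b → a = b := by
      intro v a b ha hva hb hvb
      by_contra hne
      have hmemA : a ∈ {β : ↥(Set.Iio ((Cardinal.aleph 1).ord)) | (min a b).1 ≤ β.1} :=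
        Subtype.coe_le_coe.2 (min_le_left a b)
      have hmemB : b ∈ {β : ↥(Set.Iio ((Cardinal.aleph 1).ord)) | (min a b).1 ≤ β.1} :=
        Subtype.coe_le_coe.2 (min_le_right a b)
      obtain ⟨p0⟩ := (hConn (min a b)).preconnected ⟨a, hmemA⟩ ⟨b, hmemB⟩
      let p' : G.Walk a b := p0.map
        (SimpleGraph.Embedding.induce
          {β : ↥(Set.Iio ((Cardinal.aleph 1).ord)) | (min a b).1 ≤ β.1}).toHom
      have hvp : v ∉ (p'.toPath : G.Walk a b).support := by
        intro hmem
        have hms := SimpleGraph.Walk.support_toPath_subset p' hmem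
        rw [show p'.support = _ from SimpleGraph.Walk.support_map _ _] at hms
        obtain ⟨y, hy, hyv⟩ := List.mem_map.mp hms
        have hv_lt : v.1 < (y.1).1 :=
          lt_of_lt_of_le (Subtype.coe_lt_coe.2 (lt_min hva hvb)) y.2
        have hyv' : y.1 = v := hyv
        rw [hyv'] at hv_lt
        exact lt_irrefl _ hv_lt
      have hP2 : (SimpleGraph.Walk.cons ha.symm
          (SimpleGraph.Walk.cons hb SimpleGraph.Walk.nil)).IsPath := by
        apply SimpleGraph.Walk.IsPath.cons
        · apply SimpleGraph.Walk.IsPath.cons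
          · exact SimpleGraph.Walk.IsPath.nil
          · simp only [SimpleGraph.Walk.support_nil, List.mem_singleton]
            exact ne_of_lt hvb
        · simp only [SimpleGraph.Walk.support_cons, SimpleGraph.Walk.support_nil,
            List.mem_cons, List.mem_singleton]
          rintro (h | h | h)
          · exact (ne_of_lt hva) h.symm
          · exact hne h
          · exact absurd h List.not_mem_nil
      have hpq := hAc.path_unique p'.toPath ⟨_, hP2⟩
      apply hvp
      rw [hpq]
      simp [SimpleGraph.Walk.support_cons]
    choose u hadj_u hlt_u using upN
    have echar : ∀ x y, G.Adj x y → y = u x ∨ x = u y := by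
      intro x y h
      rcases lt_trichotomy x y with hlt | heq | hgt
      · exact Or.inl (up_unique x y (u x) h hlt (hadj_u x) (hlt_u x))
      · exact absurd heq h.ne
      · exact Or.inr (up_unique y x (u y) h.symm hgt (hadj_u y) (hlt_u y))
    have hle_it : ∀ (x : ↥(Set.Iio ((Cardinal.aleph 1).ord))) (k : ℕ), x ≤ u^[k] x :=
      fun x k => Good12.le_iter (fun z => (hlt_u z).le) x k
    set v0 : ↥(Set.Iio ((Cardinal.aleph 1).ord)) := ⟨0, hΩ.pos⟩ with hv0
    have hs : (⨆ n : ℕ, (u^[n] v0).1) < (Cardinal.aleph 1).ord := by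
      apply Ordinal.iSup_lt_ord_lift
      · rw [Cardinal.mk_nat, Cardinal.lift_aleph0, Cardinal.isRegular_aleph_one.cof_eq]
        exact Cardinal.aleph0_lt_aleph_one
      · exact fun n => (u^[n] v0).2
    have hT0 : ∀ β : ↥(Set.Iio ((Cardinal.aleph 1).ord)),
        β ∈ {β : ↥(Set.Iio ((Cardinal.aleph 1).ord)) | v0.1 ≤ β.1} :=
      fun β => zero_le (a := β.1)
    obtain ⟨p⟩ := (hConn v0).preconnected ⟨v0, hT0 v0⟩ ⟨⟨_, hs⟩, hT0 _⟩
    have wm : ∀ (x y : ↥{β : ↥(Set.Iio ((Cardinal.aleph 1).ord)) | v0.1 ≤ β.1})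
        (q : (G.induce {β : ↥(Set.Iio ((Cardinal.aleph 1).ord)) | v0.1 ≤ β.1}).Walk x y),
        ∃ m n, u^[m] x.1 = u^[n] y.1 := by
      intro x y q
      induction q with
      | nil => exact ⟨0, 0, rfl⟩
      | @cons a b c hadj q ih =>
        obtain ⟨m, n, hmn⟩ := ih
        rcases echar _ _ hadj with h | h <;>
          simp only [Function.Embedding.coe_subtype] at h
        · exact ⟨m + 1, n, by rw [Function.iterate_succ_apply, ← h, hmn]⟩
        · refine ⟨m, n + 1, ?_⟩
          rw [h, ← Function.iterate_succ_apply, Function.iterate_succ_apply', hmn]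
          exact (Function.iterate_succ_apply' u n _).symm
    obtain ⟨m, n, hmn⟩ := wm _ _ p
    have h1 : (u^[m] v0).1 < (u^[m + 1] v0).1 := by
      rw [Function.iterate_succ_apply']
      exact Subtype.coe_lt_coe.2 (hlt_u _)
    have h2 : (u^[m + 1] v0).1 ≤ ⨆ k : ℕ, (u^[k] v0).1 :=
      Ordinal.le_iSup (fun k : ℕ => (u^[k] v0).1) (m + 1)
    have h3 : (⨆ k : ℕ, (u^[k] v0).1) ≤ (u^[m] v0).1 := by
      calc (⨆ k : ℕ, (u^[k] v0).1)
          ≤ (u^[n] (⟨_, hs⟩ : ↥(Set.Iio ((Cardinal.aleph 1).ord)))).1 :=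
            Subtype.coe_le_coe.2 (hle_it ⟨_, hs⟩ n)
        _ = (u^[m] v0).1 := by rw [hmn]
    exact absurd (lt_of_lt_of_le h1 h2) (not_lt_of_ge h3)
end
end

section
/- Every ordinal γ whose cofinality is at most ℵ₀ admits a good graph. -/
noncomputable section

open SimpleGraph
open Classical in
def parentO (c : ℕ → Ordinal) (β : Ordinal) : Ordinal :=
  if h : ∃ n, β < c n then c (Nat.find h) else β

def theGraph (γ : Ordinal) (c : ℕ → Ordinal) : SimpleGraph ↥(Set.Iio γ) where
  Adj x y := (x.1 < y.1 ∧ y.1 = parentO c x.1) ∨ (y.1 < x.1 ∧ x.1 = parentO c y.1)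
  symm := ⟨fun x y h => Or.symm h⟩
  loopless := ⟨fun x h => by rcases h with ⟨h, _⟩ | ⟨h, _⟩ <;> exact lt_irrefl _ h⟩

theorem induce_adj_iff (γ : Ordinal) (c : ℕ → Ordinal) (S : Set ↥(Set.Iio γ)) (a b : ↥S) :
    ((theGraph γ c).induce S).Adj a b ↔ (theGraph γ c).Adj a.1 b.1 := Iff.rfl

open Classical in
theorem parentO_eq_of_between (c : ℕ → Ordinal) (hmono : Monotone c) {β : Ordinal} {n : ℕ}
    (h1 : c n ≤ β) (h2 : β < c (n + 1)) : parentO c β = c (n + 1) := by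
  have hex : ∃ m, β < c m := ⟨n + 1, h2⟩
  have hle : Nat.find hex ≤ n + 1 := Nat.find_min' hex h2
  have hgt : n < Nat.find hex := by
    rw [Nat.lt_find_iff]
    intro m hm
    exact not_lt_of_ge ((hmono hm).trans h1)
  have : Nat.find hex = n + 1 := le_antisymm hle hgt
  rw [parentO, dif_pos hex, this]

open Classical in
theorem parentO_eq_zero (c : ℕ → Ordinal) {β : Ordinal} (h : β < c 0) :
    parentO c β = c 0 := by
  have hex : ∃ m, β < c m := ⟨0, h⟩
  rw [parentO, dif_pos hex, (Nat.find_eq_zero hex).mpr h]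

theorem reach_lemma (γ : Ordinal) (c : ℕ → Ordinal) (hmono : Monotone c)
    (hlt : ∀ n, c n < γ) (α : ↥(Set.Iio γ)) (n : ℕ) :
    ∀ (x : ↥{β : ↥(Set.Iio γ) | α.1 ≤ β.1}) (hx : x.1.1 ≤ c n),
      ((theGraph γ c).induce {β : ↥(Set.Iio γ) | α.1 ≤ β.1}).Reachable x
        ⟨⟨c n, hlt n⟩, le_trans x.2 hx⟩ := by
  induction n with
  | zero =>
    intro x hx
    rcases eq_or_lt_of_le hx with heq | hlt0
    · have hxe : x = ⟨⟨c 0, hlt 0⟩, le_trans x.2 hx⟩ := Subtype.ext (Subtype.ext heq)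
      rw [← hxe]
    · refine Adj.reachable ?_
      rw [induce_adj_iff]
      exact Or.inl ⟨hlt0, (parentO_eq_zero c hlt0).symm⟩
  | succ n ih =>
    intro x hx
    rcases eq_or_lt_of_le hx with heq | hlt1
    · have hxe : x = ⟨⟨c (n+1), hlt (n+1)⟩, le_trans x.2 hx⟩ := Subtype.ext (Subtype.ext heq)
      rw [← hxe]
    · rcases le_or_gt x.1.1 (c n) with hle | hgt
      · -- reach c n first
        have r1 := ih x hle
        have r2 : ((theGraph γ c).induce {β : ↥(Set.Iio γ) | α.1 ≤ β.1}).Reachable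
            ⟨⟨c n, hlt n⟩, le_trans x.2 hle⟩ ⟨⟨c (n+1), hlt (n+1)⟩, le_trans x.2 hx⟩ := by
          rcases eq_or_lt_of_le (hmono (Nat.le_succ n)) with hcc | hcc
          · have : (⟨⟨c n, hlt n⟩, le_trans x.2 hle⟩ :
                ↥{β : ↥(Set.Iio γ) | α.1 ≤ β.1}) = ⟨⟨c (n+1), hlt (n+1)⟩, le_trans x.2 hx⟩ :=
              Subtype.ext (Subtype.ext hcc)
            rw [this]
          · refine Adj.reachable ?_
            rw [induce_adj_iff]
            exact Or.inl ⟨hcc, (parentO_eq_of_between c hmono (le_refl _) hcc).symm⟩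
        exact r1.trans r2
      · refine Adj.reachable ?_
        rw [induce_adj_iff]
        exact Or.inl ⟨hlt1, (parentO_eq_of_between c hmono (le_of_lt hgt) hlt1).symm⟩

theorem theGraph_acyclic (γ : Ordinal) (c : ℕ → Ordinal) : (theGraph γ c).IsAcyclic := by
  classical
  intro v p hp
  have hvs : v ∈ p.support := Walk.start_mem_support p
  have hne : p.support.toFinset.Nonempty := ⟨v, List.mem_toFinset.mpr hvs⟩
  set μ := p.support.toFinset.min' hne with hμdef
  have hμmem : μ ∈ p.support := List.mem_toFinset.mp (p.support.toFinset.min'_mem hne)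
  have hmin : ∀ x ∈ p.support, μ ≤ x := fun x hx =>
    p.support.toFinset.min'_le x (List.mem_toFinset.mpr hx)
  set q := p.rotate μ hμmem with hqdef
  have hq : q.IsCycle := hp.rotate hμmem
  have hqsupp : ∀ x ∈ q.support, μ ≤ x := by
    intro x hx
    have hx' : x ∈ μ :: q.support.tail := by rw [← Walk.support_eq_cons]; exact hx
    rcases List.mem_cons.mp hx' with rfl | hx2
    · exact le_refl _
    · exact hmin x (List.mem_of_mem_tail ((p.support_rotate μ hμmem).perm.mem_iff.mp hx2))
  obtain ⟨b, hb, t, hqe⟩ := (Walk.not_nil_iff).mp hq.not_nil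
  have h3 := hq.three_le_length
  have hqrnil : ¬ q.reverse.Nil := by
    rw [Walk.nil_iff_length_eq, Walk.length_reverse]; omega
  obtain ⟨w, hw, s, hre⟩ := (Walk.not_nil_iff).mp hqrnil
  have hbsupp : b ∈ q.support := by
    rw [hqe, Walk.support_cons]; exact List.mem_cons_of_mem _ t.start_mem_support
  have hμb : μ < b := lt_of_le_of_ne (hqsupp b hbsupp) (fun e => hb.ne e)
  have hwsupp : w ∈ q.support := by
    have : w ∈ q.reverse.support := by
      rw [hre, Walk.support_cons]; exact List.mem_cons_of_mem _ s.start_mem_support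
    rwa [Walk.support_reverse, List.mem_reverse] at this
  have hμw : μ < w := lt_of_le_of_ne (hqsupp w hwsupp) (fun e => hw.ne e)
  have hbp : b.1 = parentO c μ.1 := by
    rcases hb with ⟨_, h2⟩ | ⟨h1, _⟩
    · exact h2
    · exact absurd h1 (not_lt_of_gt hμb)
  have hwp : w.1 = parentO c μ.1 := by
    rcases hw with ⟨_, h2⟩ | ⟨h1, _⟩
    · exact h2
    · exact absurd h1 (not_lt_of_gt hμw)
  have hbw : b = w := Subtype.ext (hbp.trans hwp.symm)
  have hnd : q.edges.Nodup := hq.isCircuit.isTrail.edges_nodup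
  have e1 : q.edges = s(μ, b) :: t.edges := by rw [hqe, Walk.edges_cons]
  have e2 : q.edges.reverse = s(μ, w) :: s.edges := by
    rw [← Walk.edges_reverse, hre, Walk.edges_cons]
  have e3 : q.edges = s.edges.reverse ++ [s(μ, b)] := by
    have h4 := congrArg List.reverse e2
    rw [List.reverse_reverse, List.reverse_cons] at h4
    rw [h4, hbw]
  have hlen : q.edges.length = q.length := q.length_edges
  cases hsr : s.edges.reverse with
  | nil =>
    rw [hsr, List.nil_append] at e3
    rw [e3] at hlen
    simp at hlen; omega
  | cons a rest =>
    rw [hsr, List.cons_append] at e3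
    rw [e1] at e3
    obtain ⟨ha, ht⟩ := List.cons_eq_cons.mp e3
    rw [e1] at hnd
    have hni : s(μ, b) ∉ t.edges := (List.nodup_cons.mp hnd).1
    apply hni
    rw [ht]
    exact List.mem_append_right _ (List.mem_singleton_self _)


/-- Every ordinal of cofinality at most `ℵ₀` admits a good graph. -/
theorem stmt13 (γ : Ordinal) (h : γ.cof ≤ Cardinal.aleph0) :
    ∃ G : SimpleGraph ↥(Set.Iio γ), GoodGraph γ G := by
  rcases eq_or_ne γ 0 with rfl | hγ
  · exact ⟨⊥, fun v _ _ => absurd v.2 (by simp),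
      fun α => absurd α.2 (by simp)⟩
  · obtain ⟨ι, f, hf, hcard⟩ := Ordinal.exists_lsub_cof γ
    have hpos : (0 : Ordinal) < γ := pos_iff_ne_zero.mpr hγ
    have hne : Nonempty ι := by
      have : (0 : Ordinal) < Ordinal.lsub f := hf.symm ▸ hpos
      obtain ⟨i, _⟩ := Ordinal.lt_lsub_iff.mp this
      exact ⟨i⟩
    have hcnt : Countable ι := Cardinal.mk_le_aleph0_iff.mp (hcard ▸ h)
    obtain ⟨g, hg⟩ := exists_surjective_nat ι
    set c : ℕ → Ordinal := fun n => (Finset.range (n + 1)).sup (fun k => f (g k)) with hc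
    have hmono : Monotone c := fun n m hnm =>
      Finset.sup_mono (Finset.range_subset_range.mpr (by omega))
    have hlt : ∀ n, c n < γ := by
      intro n
      refine (Finset.sup_lt_iff (by simpa using hpos)).mpr ?_
      intro k _
      rw [← hf]
      exact Ordinal.lt_lsub f (g k)
    have hub : ∀ β, β < γ → ∃ n, β ≤ c n := by
      intro β hβ
      rw [← hf] at hβ
      obtain ⟨i, hi⟩ := Ordinal.lt_lsub_iff.mp hβ
      obtain ⟨n, rfl⟩ := hg i
      refine ⟨n, hi.trans ?_⟩
      simp only [hc]
      exact Finset.le_sup (f := fun k => f (g k)) (Finset.self_mem_range_succ n)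
    refine ⟨theGraph γ c, theGraph_acyclic γ c, ?_⟩
    intro α
    haveI : Nonempty ↥{β : ↥(Set.Iio γ) | α.1 ≤ β.1} := ⟨⟨α, le_refl α.1⟩⟩
    refine ⟨?_⟩
    intro x y
    obtain ⟨n, hn⟩ := hub x.1.1 x.1.2
    obtain ⟨m, hm⟩ := hub y.1.1 y.1.2
    have hxk : x.1.1 ≤ c (max n m) := hn.trans (hmono (le_max_left n m))
    have hyk : y.1.1 ≤ c (max n m) := hm.trans (hmono (le_max_right n m))
    exact (reach_lemma γ c hmono hlt α (max n m) x hxk).trans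
      (reach_lemma γ c hmono hlt α (max n m) y hyk).symm
end
end

section
/- Let γ be an ordinal and let G be a connected graph on γ. Then G is good if and only if G contains no 'forbidden configuration': there are no ordinals α < β < δ < γ such that both {α,β} and {α,δ} are edges of G. -/
noncomputable section

section Aux

variable {γ : Ordinal} {G : SimpleGraph ↥(Set.Iio γ)}

/-- Key lemma: if no vertex has two distinct larger neighbors, then every vertex
on a path is at least the minimum of the endpoints. -/
lemma path_support_ge
    (H : ∀ a b c : ↥(Set.Iio γ), a < b → b < c → G.Adj a b → G.Adj a c → False)
    {u v : ↥(Set.Iio γ)} (p : G.Walk u v) (hp : p.IsPath) :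
    ∀ x ∈ p.support, u ≤ x ∨ v ≤ x := by
  induction p with
  | nil =>
    intro x hx
    simp only [SimpleGraph.Walk.support_nil, List.mem_singleton] at hx
    exact Or.inl hx.ge
  | @cons u w v h q ih =>
    intro x hx
    rw [SimpleGraph.Walk.support_cons, List.mem_cons] at hx
    rcases hx with rfl | hx
    · exact Or.inl le_rfl
    have hq : q.IsPath := hp.of_cons
    have hu : u ∉ q.support := (SimpleGraph.Walk.cons_isPath_iff h q).mp hp |>.2
    rcases ih hq x hx with hwx | hvx
    · -- w ≤ x
      by_cases hux : u ≤ x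
      · exact Or.inl hux
      push_neg at hux
      -- x < u, so w ≤ x < u, i.e. w < u
      have hwu : w < u := lt_of_le_of_lt hwx hux
      -- analyze q
      cases q with
      | nil =>
        -- then w = v, and w ≤ x gives v ≤ x
        exact Or.inr hwx
      | @cons _ z _ h2 r =>
        -- w is adjacent to u and to z
        have hzq : z ∈ (SimpleGraph.Walk.cons h2 r).support := by
          rw [SimpleGraph.Walk.support_cons]
          exact List.mem_cons_of_mem _ r.start_mem_support
        rcases lt_trichotomy z w with hzw | hzw | hzw
        · -- z < w : by ih, v ≤ z, so v ≤ x
          rcases ih hq z hzq with hwz | hvz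
          · exact absurd hzw (not_lt.mpr hwz)
          · exact Or.inr (hvz.trans (hzw.le.trans hwx))
        · exact absurd hzw.symm h2.ne
        · -- z > w : fork at w with neighbors u and z, both > w
          exfalso
          have huz : u ≠ z := fun huz => hu (huz ▸ hzq)
          rcases lt_or_gt_of_ne huz with huz' | huz'
          · exact H w u z hwu huz' h.symm h2
          · exact H w z u hzw huz' h2 h.symm
    · exact Or.inr hvx

lemma noFork_isAcyclic
    (H : ∀ a b c : ↥(Set.Iio γ), a < b → b < c → G.Adj a b → G.Adj a c → False) :
    G.IsAcyclic := by
  classical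
  intro u c hc
  -- take the minimal vertex of the cycle's support
  obtain ⟨m, hm, hmin⟩ :=
    Finset.exists_min_image c.support.toFinset id ⟨u, by simp⟩
  simp only [List.mem_toFinset] at hm
  have hmin' : ∀ x ∈ c.support, m ≤ x := fun x hx => hmin x (by simpa using hx)
  -- rotate the cycle to start at m
  have hc' : (c.rotate m hm).IsCycle := hc.rotate hm
  have hsupp : ∀ x ∈ (c.rotate m hm).support, x ∈ c.support := by
    intro x hx
    rcases List.mem_cons.mp
        ((c.rotate m hm).support_eq_cons ▸ hx : x ∈ m :: (c.rotate m hm).support.tail) with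
      rfl | hx'
    · exact hm
    · have := (SimpleGraph.Walk.support_rotate c m hm).perm.mem_iff.mp hx'
      exact c.support_eq_cons ▸ List.mem_cons_of_mem _ this
  -- decompose the rotated cycle
  cases hcyc : c.rotate m hm with
  | nil => exact hc'.ne_nil (by rw [hcyc])
  | @cons _ w _ h q =>
    rw [hcyc] at hc' hsupp
    rw [SimpleGraph.Walk.cons_isCycle_iff] at hc'
    obtain ⟨hqpath, hedge⟩ := hc'
    -- q : Walk w m; look at its last edge via q.reverse
    have hmw : m ≠ w := h.ne
    have hnn : ¬ q.reverse.Nil := SimpleGraph.Walk.not_nil_of_ne hmw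
    obtain ⟨z, h2, r, hq⟩ := SimpleGraph.Walk.not_nil_iff.mp hnn
    · clear hnn
      -- m is adjacent to w and z
      have hzq : z ∈ q.support := by
        have : z ∈ q.reverse.support := by
          rw [hq, SimpleGraph.Walk.support_cons]
          exact List.mem_cons_of_mem _ r.start_mem_support
        simpa using this
      have hz_in : z ∈ (SimpleGraph.Walk.cons h q).support := by
        rw [SimpleGraph.Walk.support_cons]; exact List.mem_cons_of_mem _ hzq
      have hw_in : w ∈ (SimpleGraph.Walk.cons h q).support := by
        rw [SimpleGraph.Walk.support_cons]
        exact List.mem_cons_of_mem _ q.start_mem_support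
      have hmz : m < z := lt_of_le_of_ne (hmin' z (hsupp z hz_in)) h2.ne
      have hmw' : m < w := lt_of_le_of_ne (hmin' w (hsupp w hw_in)) hmw
      -- w ≠ z, since s(m,w) ∉ q.edges but s(m,z) ∈ q.edges
      have hedge_z : s(z, m) ∈ q.edges := by
        have : s(m, z) ∈ q.reverse.edges := by
          rw [hq, SimpleGraph.Walk.edges_cons]; exact List.mem_cons_self
        rw [SimpleGraph.Walk.edges_reverse, List.mem_reverse] at this
        rwa [Sym2.eq_swap] at this
      have hwz : w ≠ z := by
        rintro rfl
        exact hedge (by rwa [Sym2.eq_swap] at hedge_z)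
      rcases lt_or_gt_of_ne hwz with h' | h'
      · exact H m w z hmw' h' h h2
      · exact H m z w hmz h' h2 h

lemma reachable_induce_of_support {V : Type*} {G : SimpleGraph V} {s : Set V} {u v : V}
    (p : G.Walk u v) (h : ∀ x ∈ p.support, x ∈ s) (hu : u ∈ s) (hv : v ∈ s) :
    (G.induce s).Reachable ⟨u, hu⟩ ⟨v, hv⟩ := by
  induction p with
  | nil => exact SimpleGraph.Reachable.refl _
  | @cons a b c h' q ih =>
    have hb : b ∈ s := h b (by
      rw [SimpleGraph.Walk.support_cons]
      exact List.mem_cons_of_mem _ q.start_mem_support)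
    have step : (G.induce s).Adj ⟨a, hu⟩ ⟨b, hb⟩ := by
      simp only [SimpleGraph.induce, SimpleGraph.comap_adj, Function.Embedding.coe_subtype]
      exact h'
    have tail := ih (fun x hx => h x (by
      rw [SimpleGraph.Walk.support_cons]; exact List.mem_cons_of_mem _ hx)) hb hv
    exact step.reachable.trans tail

end Aux

/-- A connected graph on an ordinal `γ` is good if and only if it contains no
forbidden configuration: no ordinals `α < β < δ < γ` with both `{α, β}` and
`{α, δ}` edges. -/
theorem stmt14 (γ : Ordinal) (G : SimpleGraph ↥(Set.Iio γ)) (hG : G.Connected) :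
    GoodGraph γ G ↔
      ¬ ∃ a b c : ↥(Set.Iio γ), a.1 < b.1 ∧ b.1 < c.1 ∧ G.Adj a b ∧ G.Adj a c := by
  constructor
  · rintro ⟨hacyc, htail⟩ ⟨a, b, c, hab, hbc, eab, eac⟩
    -- take a path from b to c in the tail above b
    have hb : b ∈ {β : ↥(Set.Iio γ) | b.1 ≤ β.1} := le_refl b.1
    have hcmem : c ∈ {β : ↥(Set.Iio γ) | b.1 ≤ β.1} := le_of_lt hbc
    obtain ⟨p0⟩ := (htail b).preconnected ⟨b, hb⟩ ⟨c, hcmem⟩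
    -- map it to a walk in G avoiding a
    let emb : (G.induce {β : ↥(Set.Iio γ) | b.1 ≤ β.1}) ↪g G :=
      SimpleGraph.Embedding.induce _
    let p1 : G.Walk b c := p0.toPath.1.map emb.toHom
    have hp1 : p1.IsPath :=
      SimpleGraph.Walk.map_isPath_of_injective emb.injective p0.toPath.2
    have ha_not : a ∉ p1.support := by
      intro ha
      rw [show p1.support = _ from SimpleGraph.Walk.support_map _ _, List.mem_map] at ha
      obtain ⟨⟨x, hx⟩, _, hxa⟩ := ha
      have : b.1 ≤ a.1 := by
        have : emb ⟨x, hx⟩ = a := hxa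
        rw [← this]
        exact hx
      exact absurd hab (not_lt.mpr this)
    -- two distinct paths from a to c : single edge, and via b
    rw [SimpleGraph.isAcyclic_iff_path_unique] at hacyc
    have hpath2 : (SimpleGraph.Walk.cons eab p1).IsPath :=
      (SimpleGraph.Walk.cons_isPath_iff eab p1).mpr ⟨hp1, ha_not⟩
    have := hacyc (SimpleGraph.Path.singleton eac) ⟨SimpleGraph.Walk.cons eab p1, hpath2⟩
    have hbmem : b ∈ (SimpleGraph.Path.singleton eac : G.Path a c).1.support := by
      rw [this, SimpleGraph.Walk.support_cons]
      exact List.mem_cons_of_mem _ p1.start_mem_support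
    simp only [SimpleGraph.Path.singleton, SimpleGraph.Walk.support_cons,
      SimpleGraph.Walk.support_nil, List.mem_cons, List.mem_singleton,
      List.not_mem_nil, or_false] at hbmem
    rcases hbmem with h1 | h1
    · exact lt_irrefl _ (h1 ▸ hab)
    · exact lt_irrefl _ (h1 ▸ hbc)
  · intro hno
    have H : ∀ a b c : ↥(Set.Iio γ), a < b → b < c → G.Adj a b → G.Adj a c → False := by
      intro a b c h1 h2 e1 e2
      exact hno ⟨a, b, c, h1, h2, e1, e2⟩
    refine ⟨noFork_isAcyclic H, fun α => ?_⟩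
    haveI hne : Nonempty {β : ↥(Set.Iio γ) | α.1 ≤ β.1} := ⟨⟨α, le_refl α.1⟩⟩
    refine SimpleGraph.Connected.mk ?_
    rintro ⟨u, hu⟩ ⟨v, hv⟩
    obtain ⟨p0⟩ := hG.preconnected u v
    have hp := p0.toPath.2
    have hsup := path_support_ge H p0.toPath.1 hp
    -- all vertices of the path are ≥ α
    have hall : ∀ x ∈ (p0.toPath.1).support, α.1 ≤ x.1 := by
      intro x hx
      rcases hsup x hx with h | h
      · exact le_trans hu (Subtype.coe_le_coe.mpr h)
      · exact le_trans hv (Subtype.coe_le_coe.mpr h)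
    exact reachable_induce_of_support p0.toPath.1 hall hu hv
end
end

section
/- There exists a nontrivial 1-coherent family of height ω₁ valued in ℤ/2ℤ: a family (φ_β)_{β<ω₁} of functions φ_β : {ξ : ξ < β} → ℤ/2ℤ such that φ_δ|_β − φ_β is nonzero at only finitely many points for all β ≤ δ < ω₁, while no single function ψ : {ξ : ξ < ω₁} → ℤ/2ℤ satisfies that ψ|_β − φ_β is nonzero at only finitely many points for every β < ω₁. (In particular, the first Čech cohomology group of ω₁ with coefficients in the constant sheaf ℤ/2ℤ is nonzero.) -/
noncomputable section

open Ordinal Set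
open scoped Classical

namespace Stmt19



def LadderSpec (δ : Ordinal) (f : ℕ → Ordinal) : Prop :=
  StrictMono f ∧ f 0 = 0 ∧ (∀ n, f n < δ) ∧ ∀ ξ < δ, ∃ n, ξ < f n

def lad (δ : Ordinal) : ℕ → Ordinal :=
  if h : ∃ f, LadderSpec δ f then h.choose else fun _ => 0

lemma lad_spec {δ} (h : ∃ f, LadderSpec δ f) : LadderSpec δ (lad δ) := by
  rw [lad, dif_pos h]; exact h.choose_spec

lemma lad_lt {δ} (h : ∃ f, LadderSpec δ f) (n : ℕ) : lad δ n < δ :=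
  (lad_spec h).2.2.1 n

def e (δ : Ordinal) (ξ : Ordinal) : ℕ :=
  if hL : ∃ f, LadderSpec δ f then
    if hn : ∃ n : ℕ, ξ < lad δ (n + 1) then
      max (e (lad δ (Nat.find hn + 1)) ξ) (Nat.find hn)
    else 0
  else if hS : ∃ ε, δ = ε + 1 then e hS.choose ξ
  else 0
termination_by δ
decreasing_by
  · exact lad_lt hL _
  · have h2 : hS.choose < hS.choose + 1 := by
      rw [Ordinal.add_one_eq_succ]; exact Order.lt_succ _
    rwa [← hS.choose_spec] at h2

lemma exists_block {δ ξ : Ordinal} (hL : ∃ f, LadderSpec δ f) (hξ : ξ < δ) :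
    ∃ n : ℕ, ξ < lad δ (n + 1) := by
  obtain ⟨m, hm⟩ := (lad_spec hL).2.2.2 ξ hξ
  cases m with
  | zero => exact absurd hm (by rw [(lad_spec hL).2.1]; exact (not_lt_zero (a := ξ)))
  | succ n => exact ⟨n, hm⟩

lemma e_limit {δ ξ : Ordinal} (hL : ∃ f, LadderSpec δ f)
    (hn : ∃ n : ℕ, ξ < lad δ (n + 1)) :
    e δ ξ = max (e (lad δ (Nat.find hn + 1)) ξ) (Nat.find hn) := by
  rw [e, dif_pos hL, dif_pos hn]

lemma not_ladderSpec_succ (ε : Ordinal) : ¬ ∃ f, LadderSpec (ε + 1) f := by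
  rintro ⟨f, hmono, h0, hlt, hcof⟩
  obtain ⟨n, hn⟩ := hcof ε (by rw [Ordinal.add_one_eq_succ]; exact Order.lt_succ ε)
  have := hlt n
  rw [Ordinal.add_one_eq_succ, Order.lt_succ_iff] at this
  exact absurd hn (not_lt.2 this)

lemma e_succ (ε ξ : Ordinal) : e (ε + 1) ξ = e ε ξ := by
  have hS : ∃ ε', ε + 1 = ε' + 1 := ⟨ε, rfl⟩
  rw [e, dif_neg (not_ladderSpec_succ ε), dif_pos hS]
  congr 1
  have h1 := hS.choose_spec
  have h2 : Order.succ ε = Order.succ hS.choose := by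
    rw [← Ordinal.add_one_eq_succ, ← Ordinal.add_one_eq_succ]; exact h1
  exact (Order.succ_injective h2).symm

lemma ladderSpec_exists {δ : Ordinal} (hδ : δ < (Cardinal.aleph 1).ord)
    (hlim : Order.IsSuccLimit δ) : ∃ f, LadderSpec δ f := by
  have hc : (Set.Iio δ).Countable := by
    rw [Cardinal.countable_iff_lt_aleph_one, Ordinal.mk_Iio_ordinal]
    exact Cardinal.lift_lt_aleph_one.2 ((Cardinal.lt_ord).1 hδ)
  have hne : (Set.Iio δ).Nonempty := ⟨0, hlim.pos⟩
  obtain ⟨x, hx⟩ := hc.exists_eq_range hne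
  have hxlt : ∀ n, (x n : Ordinal) < δ := fun n => by
    have : (x n : Ordinal) ∈ Set.Iio δ := by rw [hx]; exact ⟨n, rfl⟩
    exact this
  have lt1 : ∀ a : Ordinal, a < a + 1 := fun a => by
    rw [Ordinal.add_one_eq_succ]; exact Order.lt_succ a
  set F : ℕ → Ordinal := fun n => Nat.rec 0 (fun n ih => max ih (x n) + 1) n with hF
  have hFs : ∀ n, F (n + 1) = max (F n) (x n) + 1 := fun n => rfl
  refine ⟨F, ?_, rfl, ?_, ?_⟩
  · apply strictMono_nat_of_lt_succ
    intro n
    rw [hFs]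
    exact lt_of_le_of_lt (le_max_left _ _) (lt1 _)
  · intro n
    induction n with
    | zero => exact hlim.pos
    | succ n ih =>
      rw [hFs, Ordinal.add_one_eq_succ]
      exact hlim.succ_lt (max_lt ih (hxlt n))
  · intro ξ hξ
    have : ξ ∈ Set.range x := by rw [← hx]; exact hξ
    obtain ⟨n, rfl⟩ := this
    refine ⟨n + 1, ?_⟩
    rw [hFs]
    exact lt_of_le_of_lt (le_max_right _ _) (lt1 _)


def Fib (δ : Ordinal) (k : ℕ) : Set Ordinal := {ξ | ξ < δ ∧ e δ ξ ≤ k}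
def Exc (β δ : Ordinal) : Set Ordinal := {ξ | ξ < β ∧ e δ ξ ≠ e β ξ}

theorem main (δ : Ordinal) : δ < (Cardinal.aleph 1).ord →
    (∀ k, (Fib δ k).Finite) ∧ ∀ β < δ, (Exc β δ).Finite := by
  induction δ using Ordinal.induction with
  | _ δ IH =>
  intro hδ
  by_cases hL : ∃ f, LadderSpec δ f
  · constructor
    · intro k
      have hsub : Fib δ k ⊆ ⋃ n ∈ Finset.range (k + 1), Fib (lad δ (n + 1)) k := by
        rintro ξ ⟨hξδ, hek⟩
        have hn := exists_block hL hξδ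
        rw [e_limit hL hn] at hek
        rw [max_le_iff] at hek
        refine Set.mem_biUnion (Finset.mem_range.2 (Nat.lt_succ_of_le hek.2)) ?_
        exact ⟨Nat.find_spec hn, hek.1⟩
      exact Set.Finite.subset (Set.Finite.biUnion (Finset.range (k + 1)).finite_toSet
        (fun n _ => (IH _ (lad_lt hL (n + 1)) ((lad_lt hL (n + 1)).trans hδ)).1 k)) hsub
    · intro β hβ
      obtain ⟨m, hm⟩ := (lad_spec hL).2.2.2 β hβ
      cases m with
      | zero =>
        exact absurd hm (by rw [(lad_spec hL).2.1]; exact not_lt_zero (a := β))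
      | succ m' =>
        have hsub : Exc β δ ⊆ ⋃ n ∈ Finset.range (m' + 1),
            ({ξ | ξ < β ∧ ξ < lad δ (n + 1) ∧ e (lad δ (n + 1)) ξ ≠ e β ξ} ∪
             {ξ | ξ < β ∧ e β ξ < n}) := by
          rintro ξ ⟨hξβ, hne⟩
          have hn := exists_block hL (hξβ.trans hβ)
          have hNm : Nat.find hn < m' + 1 :=
            Nat.lt_succ_of_le (Nat.find_min' hn (hξβ.trans hm))
          rw [e_limit hL hn] at hne
          refine Set.mem_biUnion (Finset.mem_range.2 hNm) ?_
          by_cases h1 : e (lad δ (Nat.find hn + 1)) ξ = e β ξ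
          · right
            refine ⟨hξβ, ?_⟩
            rw [h1] at hne
            by_contra h2
            rw [not_lt] at h2
            exact hne (max_eq_left h2)
          · exact Or.inl ⟨hξβ, Nat.find_spec hn, h1⟩
        refine Set.Finite.subset (Set.Finite.biUnion (Finset.range (m' + 1)).finite_toSet
          (fun n _ => Set.Finite.union ?_ ?_)) hsub
        · set γ := lad δ (n + 1) with hγ
          rcases lt_trichotomy γ β with h | h | h
          · refine Set.Finite.subset ((IH β hβ (hβ.trans hδ)).2 γ h) ?_
            rintro ξ ⟨hξβ, hξγ, hne⟩
            exact ⟨hξγ, Ne.symm hne⟩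
          · refine Set.Finite.subset (Set.finite_empty) ?_
            rintro ξ ⟨hξβ, hξγ, hne⟩
            rw [h] at hne
            exact absurd rfl hne
          · refine Set.Finite.subset
              ((IH γ (lad_lt hL (n + 1)) ((lad_lt hL (n + 1)).trans hδ)).2 β h) ?_
            rintro ξ ⟨hξβ, hξγ, hne⟩
            exact ⟨hξβ, hne⟩
        · refine Set.Finite.subset ((IH β hβ (hβ.trans hδ)).1 n) ?_
          rintro ξ ⟨hξβ, hlt⟩
          exact ⟨hξβ, hlt.le⟩
  · by_cases hS : ∃ ε, δ = ε + 1
    · obtain ⟨ε, rfl⟩ := hS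
      have hε : ε < ε + 1 := by
        rw [Ordinal.add_one_eq_succ]; exact Order.lt_succ _
      have IHε := IH ε hε (hε.trans hδ)
      constructor
      · intro k
        refine Set.Finite.subset ((IHε.1 k).union (Set.finite_singleton ε)) ?_
        rintro ξ ⟨hξ, hek⟩
        rw [Ordinal.add_one_eq_succ, Order.lt_succ_iff] at hξ
        rcases lt_or_eq_of_le hξ with h | h
        · exact Or.inl ⟨h, by rwa [e_succ ε ξ] at hek⟩
        · exact Or.inr h
      · intro β hβ
        rw [Ordinal.add_one_eq_succ, Order.lt_succ_iff] at hβ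
        rcases lt_or_eq_of_le hβ with h | h
        · refine Set.Finite.subset (IHε.2 β h) ?_
          rintro ξ ⟨hξβ, hne⟩
          exact ⟨hξβ, by rwa [e_succ ε ξ] at hne⟩
        · subst h
          refine Set.Finite.subset (Set.finite_empty) ?_
          rintro ξ ⟨hξβ, hne⟩
          exact absurd (e_succ β ξ) hne
    · have hδ0 : δ = 0 := by
        rcases Ordinal.zero_or_succ_or_isSuccLimit δ with h | ⟨a, ha⟩ | h
        · exact h
        · exact absurd ⟨a, by rw [← ha, Ordinal.add_one_eq_succ]⟩ hS
        · exact absurd (ladderSpec_exists hδ h) hL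
      subst hδ0
      constructor
      · intro k
        refine Set.Finite.subset (Set.finite_empty) ?_
        rintro ξ ⟨hξ, _⟩
        exact absurd hξ (not_lt_zero (a := ξ))
      · intro β hβ
        exact absurd hβ (not_lt_zero (a := β))

end Stmt19

namespace Stmt19

def Phi (δ ξ : Ordinal) : ZMod 2 :=
  if ξ % Ordinal.omega0 = (e δ (ξ / Ordinal.omega0) : Ordinal) then 1 else 0

lemma div_omega_le (ξ : Ordinal) : ξ / Ordinal.omega0 ≤ ξ :=
  le_trans (Ordinal.le_mul_right _ Ordinal.omega0_pos)
    (le_trans (le_self_add (b := ξ % Ordinal.omega0))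
      (le_of_eq (Ordinal.div_add_mod ξ Ordinal.omega0)))

lemma Phi_exc {β δ : Ordinal} (hβδ : β < δ) (hδ : δ < (Cardinal.aleph 1).ord) :
    {ξ | ξ < β ∧ Phi δ ξ ≠ Phi β ξ}.Finite := by
  have hE : (Exc β δ).Finite := (main δ hδ).2 β hβδ
  refine Set.Finite.subset (hE.biUnion (fun η _ =>
    (Set.finite_singleton (Ordinal.omega0 * η + e β η)).insert
      (Ordinal.omega0 * η + e δ η))) ?_
  rintro ξ ⟨hξβ, hne⟩
  set η := ξ / Ordinal.omega0 with hη
  have hηβ : η < β := lt_of_le_of_lt (div_omega_le ξ) hξβ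
  have hee : e δ η ≠ e β η := by
    intro h
    apply hne
    unfold Phi
    rw [← hη, h]
  refine Set.mem_biUnion (show η ∈ Exc β δ from ⟨hηβ, hee⟩) ?_
  have hξeq : Ordinal.omega0 * η + ξ % Ordinal.omega0 = ξ :=
    Ordinal.div_add_mod ξ Ordinal.omega0
  have hror : ξ % Ordinal.omega0 = (e δ η : Ordinal) ∨
      ξ % Ordinal.omega0 = (e β η : Ordinal) := by
    by_contra h
    push_neg at h
    apply hne
    unfold Phi
    rw [← hη, if_neg h.1, if_neg h.2]
  rcases hror with h | h
  · exact Or.inl (by rw [← hξeq, h])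
  · exact Or.inr (by rw [← hξeq, h]; exact rfl)

lemma col_div (η : Ordinal) (n : ℕ) :
    (Ordinal.omega0 * η + n) / Ordinal.omega0 = η := by
  rw [Ordinal.mul_add_div _ Ordinal.omega0_ne_zero,
    Ordinal.div_eq_zero_of_lt (Ordinal.nat_lt_omega0 n), add_zero]

lemma col_mod (η : Ordinal) (n : ℕ) :
    (Ordinal.omega0 * η + n) % Ordinal.omega0 = n :=
  by rw [Ordinal.mul_add_mod_self, Ordinal.mod_eq_of_lt (Ordinal.nat_lt_omega0 n)]

lemma Phi_col (δ η : Ordinal) (n : ℕ) :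
    Phi δ (Ordinal.omega0 * η + n) = if n = e δ η then 1 else 0 := by
  unfold Phi
  rw [col_div, col_mod]
  congr 1
  simp [Nat.cast_inj]

end Stmt19

namespace Stmt19

open scoped Cardinal in
lemma column_lt {α η : Ordinal} (hη : η < α) (n : ℕ) :
    Ordinal.omega0 * η + n < Ordinal.omega0 * (α + 1) := by
  have h1 : Ordinal.omega0 * η + (n : Ordinal) < Ordinal.omega0 * η + Ordinal.omega0 :=
    add_lt_add_right (Ordinal.nat_lt_omega0 n) _
  have h2 : Ordinal.omega0 * η + Ordinal.omega0 = Ordinal.omega0 * (η + 1) :=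
    (mul_add_one Ordinal.omega0 η).symm
  have h3 : Ordinal.omega0 * (η + 1) ≤ Ordinal.omega0 * (α + 1) :=
    mul_le_mul_right (add_le_add_left hη.le 1) _
  exact lt_of_lt_of_le (h2 ▸ h1) h3

open scoped Cardinal in
lemma omega_mul_lt {α : Ordinal} (hα : α < (Cardinal.aleph 1).ord) :
    Ordinal.omega0 * (α + 1) < (Cardinal.aleph 1).ord := by
  rw [Cardinal.lt_ord] at hα ⊢
  have h1 : (Ordinal.omega0 * (α + 1)).card = Ordinal.card Ordinal.omega0 * (α + 1).card :=
    Ordinal.card_mul _ _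
  rw [h1, Ordinal.card_omega0]
  have h2 : (α + 1).card ≤ ℵ₀ := by
    rw [Ordinal.add_one_eq_succ, Ordinal.card_succ]
    have : α.card ≤ ℵ₀ := by
      have h := hα
      rwa [← Cardinal.succ_aleph0, Order.lt_succ_iff] at h
    calc α.card + 1 ≤ ℵ₀ + ℵ₀ := add_le_add this (Cardinal.one_le_aleph0)
      _ = ℵ₀ := Cardinal.aleph0_add_aleph0
  calc ℵ₀ * (α + 1).card ≤ ℵ₀ * ℵ₀ := mul_le_mul_right h2 _
    _ = ℵ₀ := Cardinal.aleph0_mul_aleph0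
    _ < Cardinal.aleph 1 := Cardinal.aleph0_lt_aleph_one

lemma self_lt_omega_mul {α : Ordinal} : α < Ordinal.omega0 * (α + 1) := by
  have h1 : α < α + 1 := by rw [Ordinal.add_one_eq_succ]; exact Order.lt_succ _
  exact lt_of_lt_of_le h1 (Ordinal.le_mul_right _ Ordinal.omega0_pos)

end Stmt19

namespace Stmt19
open scoped Cardinal

section Nontrivial

variable (ψ : Set.Iio ((Cardinal.aleph 1).ord) → ZMod 2)

def psi' : Ordinal → ZMod 2 :=
  fun ξ => if h : ξ < (Cardinal.aleph 1).ord then ψ ⟨ξ, h⟩ else 0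

def g : Ordinal → ℕ :=
  fun η => if h : ∃ n : ℕ, psi' ψ (Ordinal.omega0 * η + n) = 1 then Nat.find h else 0

lemma g_approx {α : Ordinal} (hα : α < (Cardinal.aleph 1).ord)
    (hX : ∀ β : Set.Iio ((Cardinal.aleph 1).ord),
      {ξ : Set.Iio β.1 | ψ ⟨ξ.1, Set.mem_Iio.mpr
        ((Set.mem_Iio.mp ξ.2).trans (Set.mem_Iio.mp β.2))⟩ - Phi β.1 ξ.1 ≠ 0}.Finite) :
    {η | η < α ∧ g ψ η ≠ e α η}.Finite := by
  set δ := Ordinal.omega0 * (α + 1) with hδdef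
  have hδ : δ < (Cardinal.aleph 1).ord := omega_mul_lt hα
  have hαδ : α < δ := self_lt_omega_mul
  have hXf := hX ⟨δ, hδ⟩
  set X : Set Ordinal := Subtype.val '' {ξ : Set.Iio δ | ψ ⟨ξ.1, Set.mem_Iio.mpr
      ((Set.mem_Iio.mp ξ.2).trans (Set.mem_Iio.mp (show δ ∈ Set.Iio _ from hδ)))⟩
      - Phi δ ξ.1 ≠ 0} with hXdef
  have hXfin : X.Finite := Set.Finite.image _ hXf
  have hD : ((fun ξ => ξ / Ordinal.omega0) '' X).Finite := hXfin.image _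
  have hE : (Exc α δ).Finite := (main δ hδ).2 α hαδ
  refine Set.Finite.subset (hD.union hE) ?_
  rintro η ⟨hηα, hg⟩
  by_contra hnot
  rw [Set.mem_union] at hnot
  push_neg at hnot
  obtain ⟨hnD, hnE⟩ := hnot
  have heq : e δ η = e α η := by
    by_contra hne
    exact hnE ⟨hηα, hne⟩
  -- each column point is not exceptional
  have hcols : ∀ n : ℕ, psi' ψ (Ordinal.omega0 * η + n) = Phi δ (Ordinal.omega0 * η + n) := by
    intro n
    have hlt : Ordinal.omega0 * η + n < δ := column_lt hηα n
    by_cases hmem : (Ordinal.omega0 * η + n) ∈ X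
    · exfalso
      apply hnD
      exact ⟨_, hmem, col_div η n⟩
    · have : ψ ⟨Ordinal.omega0 * η + n, Set.mem_Iio.mpr (hlt.trans hδ)⟩ -
          Phi δ (Ordinal.omega0 * η + n) = 0 := by
        by_contra hne
        exact hmem ⟨⟨_, hlt⟩, hne, rfl⟩
      have h2 := sub_eq_zero.mp this
      rw [psi', dif_pos (hlt.trans hδ)]
      exact h2
  have hex : ∃ n : ℕ, psi' ψ (Ordinal.omega0 * η + n) = 1 := by
    refine ⟨e δ η, ?_⟩
    rw [hcols, Phi_col, if_pos rfl]
  have hfind : Nat.find hex = e δ η := by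
    have hspec := Nat.find_spec hex
    rw [hcols, Phi_col] at hspec
    by_contra hne
    rw [if_neg hne] at hspec
    exact absurd hspec (by decide)
  apply hg
  rw [g, dif_pos hex, hfind, heq]

end Nontrivial

end Stmt19

namespace Stmt19
open scoped Cardinal

lemma pigeonhole (G : Ordinal → ℕ) :
    ∃ k, ¬ {η | η < (Cardinal.aleph 1).ord ∧ G η = k}.Countable := by
  by_contra h
  push_neg at h
  have hsub : Set.Iio ((Cardinal.aleph 1).ord) ⊆
      ⋃ k : ℕ, {η | η < (Cardinal.aleph 1).ord ∧ G η = k} :=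
    fun η hη => Set.mem_iUnion.2 ⟨G η, hη, rfl⟩
  have hcnt : (Set.Iio ((Cardinal.aleph 1).ord)).Countable :=
    Set.Countable.mono hsub (Set.countable_iUnion h)
  rw [Cardinal.countable_iff_lt_aleph_one, Ordinal.mk_Iio_ordinal, Cardinal.card_ord] at hcnt
  rw [Cardinal.lift_lt_aleph_one] at hcnt
  exact lt_irrefl _ hcnt

theorem stmt19_main :
    ∃ φ : (β : Set.Iio ((Cardinal.aleph 1).ord)) → Set.Iio β.1 → ZMod 2,
      (∀ (β δ : Set.Iio ((Cardinal.aleph 1).ord)) (h : β.1 ≤ δ.1),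
        {ξ : Set.Iio β.1 | φ δ ⟨ξ.1, lt_of_lt_of_le ξ.2 h⟩ - φ β ξ ≠ 0}.Finite) ∧
      ¬ ∃ ψ : Set.Iio ((Cardinal.aleph 1).ord) → ZMod 2,
          ∀ β : Set.Iio ((Cardinal.aleph 1).ord),
            {ξ : Set.Iio β.1 | ψ ⟨ξ.1, Set.mem_Iio.mpr ((Set.mem_Iio.mp ξ.2).trans
              (Set.mem_Iio.mp β.2))⟩ - φ β ξ ≠ 0}.Finite := by
  refine ⟨fun β ξ => Phi β.1 ξ.1, ?_, ?_⟩
  · intro β δ h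
    rcases eq_or_lt_of_le h with heq | hlt
    · refine Set.Finite.subset Set.finite_empty ?_
      rintro ξ hξ
      have hp : Phi δ.1 ξ.1 = Phi β.1 ξ.1 := by rw [← heq]
      exact absurd (sub_eq_zero.2 hp) hξ
    · have hfin : {ξ | ξ < β.1 ∧ Phi δ.1 ξ ≠ Phi β.1 ξ}.Finite :=
        Phi_exc hlt (Set.mem_Iio.mp δ.2)
      refine Set.Finite.subset (hfin.preimage (Set.injOn_of_injective
        (Subtype.val_injective (p := fun x => x ∈ Set.Iio β.1)))) ?_
      rintro ξ hξ
      exact ⟨ξ.2, sub_ne_zero.mp hξ⟩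
  · rintro ⟨ψ, hψ⟩
    obtain ⟨k, hk⟩ := pigeonhole (g ψ)
    have hinf : {η | η < (Cardinal.aleph 1).ord ∧ g ψ η = k}.Infinite :=
      fun hfin => hk hfin.countable
    set f := hinf.natEmbedding with hf
    set α := iSup (fun n => (f n : Ordinal) + 1) with hα
    have hflt : ∀ n : ℕ, (f n : Ordinal) + 1 < (Cardinal.aleph 1).ord := by
      intro n
      have h1 : (f n : Ordinal) < (Cardinal.aleph 1).ord := (f n).2.1
      rw [Ordinal.add_one_eq_succ]
      exact (Cardinal.isSuccLimit_ord (Cardinal.aleph0_le_aleph 1)).succ_lt h1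
    have hαlt : α < (Cardinal.aleph 1).ord :=
      by rw [Cardinal.ord_aleph]; exact Ordinal.iSup_lt_omega_one (fun n => (Cardinal.ord_aleph 1) ▸ hflt n)
    have hSinf : {η | η < α ∧ g ψ η = k}.Infinite := by
      have hinj : Function.Injective (fun n : ℕ => (f n : Ordinal)) :=
        Subtype.val_injective.comp f.injective
      apply Set.infinite_of_injective_forall_mem hinj
      intro n
      refine ⟨?_, (f n).2.2⟩
      have h1 : (f n : Ordinal) + 1 ≤ α := Ordinal.le_iSup (fun n : ℕ => (f n : Ordinal) + 1) n
      have h2 : (f n : Ordinal) < (f n : Ordinal) + 1 := by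
        rw [Ordinal.add_one_eq_succ]; exact Order.lt_succ _
      exact lt_of_lt_of_le h2 h1
    have hfin : ({η | η < α ∧ g ψ η ≠ e α η} ∪ Fib α k).Finite :=
      (g_approx ψ hαlt hψ).union ((main α hαlt).1 k)
    apply hSinf
    refine hfin.subset ?_
    rintro η ⟨hηα, hgk⟩
    by_cases hge : g ψ η = e α η
    · exact Or.inr ⟨hηα, by rw [← hge, hgk]⟩
    · exact Or.inl ⟨hηα, hge⟩

end Stmt19

/-- There exists a nontrivial `1`-coherent family of height `ω₁` valued in `ℤ/2ℤ`:
a family `(φ_β)_{β<ω₁}` of functions `φ_β : {ξ : ξ < β} → ℤ/2ℤ` that is coherent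
(any two members agree at all but finitely many points of their common domain)
but is trivialized by no single function `ψ : {ξ : ξ < ω₁} → ℤ/2ℤ`. -/
theorem stmt19 :
    ∃ φ : (β : Set.Iio ((Cardinal.aleph 1).ord)) → Set.Iio β.1 → ZMod 2,
      (∀ (β δ : Set.Iio ((Cardinal.aleph 1).ord)) (h : β.1 ≤ δ.1),
        {ξ : Set.Iio β.1 | φ δ ⟨ξ.1, lt_of_lt_of_le ξ.2 h⟩ - φ β ξ ≠ 0}.Finite) ∧
      ¬ ∃ ψ : Set.Iio ((Cardinal.aleph 1).ord) → ZMod 2,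
          ∀ β : Set.Iio ((Cardinal.aleph 1).ord),
            {ξ : Set.Iio β.1 | ψ ⟨ξ.1, Set.mem_Iio.mpr ((Set.mem_Iio.mp ξ.2).trans (Set.mem_Iio.mp β.2))⟩ - φ β ξ ≠ 0}.Finite := by
  exact Stmt19.stmt19_main
end
end
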